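/- arXiv:0807.0599 — 6 statements merged into one kernel-verified Lean document; each statement's English description precedes it below -/
import Mathlib

section
/- If N is a normal subgroup of a finite group G of index n with coset representatives g_1,...,g_n, then in the group algebra A = k[G] with subalgebra B = k[N], for all x, y ∈ A one has x ⊗_B y = Σ_j x γ_j(y) u_j, where u_j = g_j^{-1} ⊗_B g_j ∈ (A ⊗_B A)^B and γ_j is the B-bimodule map sending Σ_g n_g g to Σ_{h∈N} n_{h g_j} h g_j; in particular B is a depth two subring of A. -/
open TensorProduct MonoidAlgebra

/-- Projection of a group algebra element onto the span of the coset `N·gj`: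
`Σ_g n_g g ↦ Σ_{h ∈ N} n_{h gj} (h gj)`. -/
noncomputable def cosetProjection (k : Type*) [Field k] {G : Type*} [Group G]
    (N : Subgroup G) (gj : G) (f : MonoidAlgebra k G) : MonoidAlgebra k G :=
  letI : DecidablePred (fun x : G => x * gj⁻¹ ∈ N) := Classical.decPred _
  MonoidAlgebra.ofCoeff (Finsupp.filter (fun x : G => x * gj⁻¹ ∈ N) f.coeff)


section Aux
variable {k : Type*} [Field k] {G : Type*} [Group G] (N : Subgroup G)

lemma cp_pos {gj x : G} (h : x * gj⁻¹ ∈ N) (f : MonoidAlgebra k G) :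
    (cosetProjection k N gj f).coeff x = f.coeff x := by
  classical
  simp only [cosetProjection]
  exact Finsupp.filter_apply_pos _ _ h

lemma cp_neg {gj x : G} (h : x * gj⁻¹ ∉ N) (f : MonoidAlgebra k G) :
    (cosetProjection k N gj f).coeff x = 0 := by
  classical
  simp only [cosetProjection]
  exact Finsupp.filter_apply_neg _ _ h

lemma cp_add (gj : G) (f f' : MonoidAlgebra k G) :
    cosetProjection k N gj (f + f') =
      cosetProjection k N gj f + cosetProjection k N gj f' := by
  classical
  simp only [cosetProjection]
  exact congrArg MonoidAlgebra.ofCoeff (Finsupp.filter_add (v := f.coeff) (v' := f'.coeff))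

lemma cp_smul (gj : G) (c : k) (f : MonoidAlgebra k G) :
    cosetProjection k N gj (c • f) = c • cosetProjection k N gj f := by
  classical
  simp only [cosetProjection]
  exact congrArg MonoidAlgebra.ofCoeff (Finsupp.filter_smul (b := c) (v := f.coeff))

lemma cp_zero (gj : G) : cosetProjection k N gj (0 : MonoidAlgebra k G) = 0 := by
  ext x
  by_cases h : x * gj⁻¹ ∈ N
  · rw [cp_pos N h]
  · rw [cp_neg N h]; simp

lemma cp_single_of_pos {gj g' : G} (h : g' * gj⁻¹ ∈ N) (c : k) :
    cosetProjection k N gj (MonoidAlgebra.single g' c) = MonoidAlgebra.single g' c := by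
  classical
  simp only [cosetProjection]
  exact congrArg MonoidAlgebra.ofCoeff (Finsupp.filter_single_of_pos _ h)

lemma cp_single_of_neg {gj g' : G} (h : g' * gj⁻¹ ∉ N) (c : k) :
    cosetProjection k N gj (MonoidAlgebra.single g' c) = 0 := by
  classical
  simp only [cosetProjection]
  exact congrArg MonoidAlgebra.ofCoeff (Finsupp.filter_single_of_neg _ h)

lemma cp_single_mul {gj h : G} (hh : h ∈ N) (c : k) (a : MonoidAlgebra k G) :
    cosetProjection k N gj (MonoidAlgebra.single h c * a)
      = MonoidAlgebra.single h c * cosetProjection k N gj a := by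
  ext x
  rw [MonoidAlgebra.single_mul_apply]
  by_cases hx : x * gj⁻¹ ∈ N
  · rw [cp_pos N hx, MonoidAlgebra.single_mul_apply,
      cp_pos N (show (h⁻¹ * x) * gj⁻¹ ∈ N by
        rw [mul_assoc]; exact N.mul_mem (N.inv_mem hh) hx)]
  · rw [cp_neg N hx]
    have hx2 : (h⁻¹ * x) * gj⁻¹ ∉ N := by
      intro hc
      apply hx
      have := N.mul_mem hh hc
      rwa [← mul_assoc, ← mul_assoc, mul_inv_cancel, one_mul] at this
    rw [cp_neg N hx2, mul_zero]

lemma cp_mul_single [hN : N.Normal] {gj h : G} (hh : h ∈ N) (c : k)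
    (a : MonoidAlgebra k G) :
    cosetProjection k N gj (a * MonoidAlgebra.single h c)
      = cosetProjection k N gj a * MonoidAlgebra.single h c := by
  ext x
  rw [MonoidAlgebra.mul_single_apply]
  by_cases hx : x * gj⁻¹ ∈ N
  · rw [cp_pos N hx, MonoidAlgebra.mul_single_apply,
      cp_pos N (show (x * h⁻¹) * gj⁻¹ ∈ N by
        have : (x * h⁻¹) * gj⁻¹ = (x * gj⁻¹) * (gj * h⁻¹ * gj⁻¹) := by group
        rw [this]
        exact N.mul_mem hx (hN.conj_mem _ (N.inv_mem hh) gj))]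
  · rw [cp_neg N hx]
    have hx2 : (x * h⁻¹) * gj⁻¹ ∉ N := by
      intro hc
      apply hx
      have : x * gj⁻¹ = ((x * h⁻¹) * gj⁻¹) * (gj * h * gj⁻¹) := by group
      rw [this]
      exact N.mul_mem hc (hN.conj_mem _ hh gj)
    rw [cp_neg N hx2, zero_mul]

lemma adjoin_le_span {b : MonoidAlgebra k G}
    (hb : b ∈ Algebra.adjoin k ((fun h => MonoidAlgebra.of k G h) '' (N : Set G))) :
    b ∈ Submodule.span k ((fun h => MonoidAlgebra.of k G h) '' (N : Set G)) := by
  have h1 : ((fun h => MonoidAlgebra.of k G h) '' (N : Set G)) =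
      ((N.toSubmonoid.map (MonoidAlgebra.of k G) : Submonoid (MonoidAlgebra k G)) :
        Set (MonoidAlgebra k G)) := by
    rw [Submonoid.coe_map]; rfl
  rw [← Subalgebra.mem_toSubmodule, Algebra.adjoin_eq_span, h1,
    Submonoid.closure_eq] at hb
  rwa [h1]

lemma cp_B_left (gj : G) {b : MonoidAlgebra k G}
    (hb : b ∈ Algebra.adjoin k ((fun h => MonoidAlgebra.of k G h) '' (N : Set G)))
    (a : MonoidAlgebra k G) :
    cosetProjection k N gj (b * a) = b * cosetProjection k N gj a := by
  have hb' := adjoin_le_span N hb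
  clear hb
  induction hb' using Submodule.span_induction with
  | mem x hx =>
      obtain ⟨h, hh, rfl⟩ := hx
      exact cp_single_mul N hh 1 a
  | zero => simp [cp_zero]
  | add x y _ _ hx hy => rw [add_mul, cp_add, hx, hy, add_mul]
  | smul c x _ hx => rw [smul_mul_assoc, cp_smul, hx, smul_mul_assoc]

lemma cp_B_right [N.Normal] (gj : G) {b : MonoidAlgebra k G}
    (hb : b ∈ Algebra.adjoin k ((fun h => MonoidAlgebra.of k G h) '' (N : Set G)))
    (a : MonoidAlgebra k G) :
    cosetProjection k N gj (a * b) = cosetProjection k N gj a * b := by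
  have hb' := adjoin_le_span N hb
  clear hb
  induction hb' using Submodule.span_induction with
  | mem x hx =>
      obtain ⟨h, hh, rfl⟩ := hx
      exact cp_mul_single N hh 1 a
  | zero => simp [cp_zero]
  | add x y _ _ hx hy => rw [mul_add, cp_add, hx, hy, mul_add]
  | smul c x _ hx => rw [mul_smul_comm, cp_smul, hx, mul_smul_comm]

lemma ma_induction {k : Type*} [Semiring k] {G : Type*} {p : MonoidAlgebra k G → Prop}
    (y : MonoidAlgebra k G)
    (h0 : p 0)
    (hadd : ∀ y1 y2 : MonoidAlgebra k G, p y1 → p y2 → p (y1 + y2))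
    (hsingle : ∀ (g : G) (c : k), p (MonoidAlgebra.single g c)) : p y :=
  MonoidAlgebra.induction_linear y h0 hadd hsingle

noncomputable def cpL (k : Type*) [Field k] {G : Type*} [Group G]
    (N : Subgroup G) (gj : G) : MonoidAlgebra k G →ₗ[k] MonoidAlgebra k G where
  toFun := cosetProjection k N gj
  map_add' := cp_add N gj
  map_smul' := cp_smul N gj

end Aux

/-- If `N` is a normal subgroup of a finite group `G` of index `n` with (right)
coset representatives `g 0, …, g (n-1)`, then in `A = k[G]` with `B = k[N]`, for all `x, y ∈ A`
one has `x ⊗_B y = Σ_j x γ_j(y) u_j`, where `u_j = g_j⁻¹ ⊗_B g_j` is `B`-central and `γ_j` is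
the `B`-bimodule map projecting onto the coset `N g_j`; in particular `B` is a depth two subring
of `A` (the quasibasis yields a split epimorphism `A^n → A ⊗_B A`). -/
theorem group_algebra_normal_subgroup_depth_two_quasibasis
    (k : Type*) [Field k] (G : Type*) [Group G] [Fintype G]
    (N : Subgroup G) [N.Normal] (n : ℕ) (g : Fin n → G)
    (hreps : ∀ x : G, ∃! j : Fin n, x * (g j)⁻¹ ∈ N) :
    ∀ (B : Subalgebra k (MonoidAlgebra k G)),
      B = Algebra.adjoin k ((fun h => MonoidAlgebra.of k G h) '' (N : Set G)) →
    ∀ (rel : Submodule k (MonoidAlgebra k G ⊗[k] MonoidAlgebra k G)),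
      rel = Submodule.span k {z | ∃ (x y : MonoidAlgebra k G) (b : MonoidAlgebra k G),
        b ∈ B ∧ z = (x * b) ⊗ₜ[k] y - x ⊗ₜ[k] (b * y)} →
    -- (1) each `γ_j` is a `B`-bimodule map
    (∀ (j : Fin n) (b b' : MonoidAlgebra k G), b ∈ B → b' ∈ B →
      ∀ a, cosetProjection k N (g j) (b * a * b') = b * cosetProjection k N (g j) a * b') ∧
    -- (2) each `u_j = g_j⁻¹ ⊗_B g_j` is `B`-central
    (∀ (j : Fin n), ∀ b ∈ B,
      (b * MonoidAlgebra.of k G (g j)⁻¹) ⊗ₜ[k] MonoidAlgebra.of k G (g j)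
        - MonoidAlgebra.of k G (g j)⁻¹ ⊗ₜ[k] (MonoidAlgebra.of k G (g j) * b) ∈ rel) ∧
    -- (3) the right depth two quasibasis equation `x ⊗_B y = Σ_j x γ_j(y) u_j`
    (∀ x y : MonoidAlgebra k G,
      x ⊗ₜ[k] y - ∑ j : Fin n,
        (x * cosetProjection k N (g j) y * MonoidAlgebra.of k G (g j)⁻¹)
          ⊗ₜ[k] MonoidAlgebra.of k G (g j) ∈ rel) ∧
    -- (4) hence `A ⊗_B A` is a direct summand of `A^n`: the evident epimorphism splits
    (∃ ψ : ((MonoidAlgebra k G ⊗[k] MonoidAlgebra k G) ⧸ rel) →ₗ[k]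
        (Fin n → MonoidAlgebra k G),
      (∀ x y : MonoidAlgebra k G, ψ (Submodule.Quotient.mk (x ⊗ₜ[k] y)) =
        fun j => x * cosetProjection k N (g j) y) ∧
      (∀ q, (∑ j : Fin n, Submodule.Quotient.mk
          ((ψ q j * MonoidAlgebra.of k G (g j)⁻¹) ⊗ₜ[k] MonoidAlgebra.of k G (g j))) = q)) := by

  intro B hB rel hrel
  have hgen : ∀ (x y b : MonoidAlgebra k G), b ∈ B →
      (x * b) ⊗ₜ[k] y - x ⊗ₜ[k] (b * y) ∈ rel := by
    intro x y b hb
    rw [hrel]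
    exact Submodule.subset_span ⟨x, y, b, hb, rfl⟩
  -- Part 1
  have part1 : ∀ (j : Fin n) (b b' : MonoidAlgebra k G), b ∈ B → b' ∈ B →
      ∀ a, cosetProjection k N (g j) (b * a * b')
        = b * cosetProjection k N (g j) a * b' := by
    intro j b b' hb hb' a
    rw [hB] at hb hb'
    rw [cp_B_right N (g j) hb', cp_B_left N (g j) hb]
  -- Part 3
  have part3 : ∀ x y : MonoidAlgebra k G,
      x ⊗ₜ[k] y - ∑ j : Fin n,
        (x * cosetProjection k N (g j) y * MonoidAlgebra.of k G (g j)⁻¹)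
          ⊗ₜ[k] MonoidAlgebra.of k G (g j) ∈ rel := by
    intro x y
    induction y using ma_induction with
    | h0 =>
        simp only [cp_zero, mul_zero, zero_mul, TensorProduct.tmul_zero,
          TensorProduct.zero_tmul, Finset.sum_const_zero, sub_zero]
        exact zero_mem rel
    | hadd y1 y2 h1 h2 =>
        have e : x ⊗ₜ[k] (y1 + y2) - ∑ j : Fin n,
            (x * cosetProjection k N (g j) (y1 + y2) * MonoidAlgebra.of k G (g j)⁻¹)
              ⊗ₜ[k] MonoidAlgebra.of k G (g j)
          = (x ⊗ₜ[k] y1 - ∑ j : Fin n,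
              (x * cosetProjection k N (g j) y1 * MonoidAlgebra.of k G (g j)⁻¹)
                ⊗ₜ[k] MonoidAlgebra.of k G (g j))
            + (x ⊗ₜ[k] y2 - ∑ j : Fin n,
              (x * cosetProjection k N (g j) y2 * MonoidAlgebra.of k G (g j)⁻¹)
                ⊗ₜ[k] MonoidAlgebra.of k G (g j)) := by
          simp only [cp_add, mul_add, add_mul, TensorProduct.tmul_add,
            TensorProduct.add_tmul, Finset.sum_add_distrib]
          abel
        rw [e]
        exact add_mem h1 h2
    | hsingle g' c =>
        obtain ⟨j0, hj0, huniq⟩ := hreps g'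
        have hsum : (∑ j : Fin n,
            (x * cosetProjection k N (g j) (MonoidAlgebra.single g' c)
              * MonoidAlgebra.of k G (g j)⁻¹) ⊗ₜ[k] MonoidAlgebra.of k G (g j))
          = (x * (MonoidAlgebra.single g' c : MonoidAlgebra k G)
                * MonoidAlgebra.of k G (g j0)⁻¹)
              ⊗ₜ[k] MonoidAlgebra.of k G (g j0) := by
          rw [Finset.sum_eq_single j0]
          · rw [cp_single_of_pos N hj0]
          · intro j _ hj
            have hne : g' * (g j)⁻¹ ∉ N := fun hc => hj (huniq j hc)
            rw [cp_single_of_neg N hne, mul_zero, zero_mul,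
              TensorProduct.zero_tmul]
          · intro hj; exact absurd (Finset.mem_univ j0) hj
        rw [hsum]
        have hbB : (MonoidAlgebra.single (g' * (g j0)⁻¹) c : MonoidAlgebra k G) ∈ B := by
          have hb1 : (MonoidAlgebra.single (g' * (g j0)⁻¹) c : MonoidAlgebra k G)
              = c • MonoidAlgebra.of k G (g' * (g j0)⁻¹) := by
            simp [MonoidAlgebra.of_apply, Finsupp.smul_single]
          rw [hb1, hB]
          exact Subalgebra.smul_mem _
            (Algebra.subset_adjoin (Set.mem_image_of_mem _ hj0)) c
        have key := hgen x (MonoidAlgebra.of k G (g j0))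
          (MonoidAlgebra.single (g' * (g j0)⁻¹) c) hbB
        have e1 : (MonoidAlgebra.single (g' * (g j0)⁻¹) c : MonoidAlgebra k G)
            * MonoidAlgebra.of k G (g j0) = (MonoidAlgebra.single g' c : MonoidAlgebra k G) := by
          rw [MonoidAlgebra.of_apply]
          rw [show ((MonoidAlgebra.single (g' * (g j0)⁻¹) c : MonoidAlgebra k G)
              * MonoidAlgebra.single (g j0) 1)
            = MonoidAlgebra.single (g' * (g j0)⁻¹ * g j0) (c * 1)
            from MonoidAlgebra.single_mul_single _ _ _ _]
          rw [inv_mul_cancel_right, mul_one]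
        have e2 : x * (MonoidAlgebra.single g' c : MonoidAlgebra k G)
              * MonoidAlgebra.of k G (g j0)⁻¹
            = x * (MonoidAlgebra.single (g' * (g j0)⁻¹) c : MonoidAlgebra k G) := by
          rw [mul_assoc, MonoidAlgebra.of_apply]
          rw [show ((MonoidAlgebra.single g' c : MonoidAlgebra k G)
              * MonoidAlgebra.single (g j0)⁻¹ 1)
            = MonoidAlgebra.single (g' * (g j0)⁻¹) (c * 1)
            from MonoidAlgebra.single_mul_single _ _ _ _]
          rw [mul_one]
        rw [e1] at key
        rw [e2]
        have := Submodule.neg_mem rel key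
        rwa [neg_sub] at this
  -- Part 2
  have part2 : ∀ (j : Fin n), ∀ b ∈ B,
      (b * MonoidAlgebra.of k G (g j)⁻¹) ⊗ₜ[k] MonoidAlgebra.of k G (g j)
        - MonoidAlgebra.of k G (g j)⁻¹ ⊗ₜ[k] (MonoidAlgebra.of k G (g j) * b) ∈ rel := by
    intro j b hb
    rw [hB] at hb
    have hb' := adjoin_le_span N hb
    clear hb
    induction hb' using Submodule.span_induction with
    | mem x hx =>
        obtain ⟨h, hh, rfl⟩ := hx
        have hmem : MonoidAlgebra.of k G (g j * h * (g j)⁻¹) ∈ B := by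
          rw [hB]
          exact Algebra.subset_adjoin
            (Set.mem_image_of_mem _ (‹N.Normal›.conj_mem _ hh (g j)))
        have key := hgen (MonoidAlgebra.of k G (g j)⁻¹) (MonoidAlgebra.of k G (g j))
          (MonoidAlgebra.of k G (g j * h * (g j)⁻¹)) hmem
        simp only [← map_mul] at key ⊢
        rw [show (g j)⁻¹ * (g j * h * (g j)⁻¹) = h * (g j)⁻¹ by group,
          show (g j * h * (g j)⁻¹) * g j = g j * h by group] at key
        exact key
    | zero =>
        simp only [zero_mul, mul_zero, TensorProduct.zero_tmul,
          TensorProduct.tmul_zero, sub_zero]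
        exact zero_mem rel
    | add b1 b2 _ _ h1 h2 =>
        have e : ((b1 + b2) * MonoidAlgebra.of k G (g j)⁻¹) ⊗ₜ[k] MonoidAlgebra.of k G (g j)
            - MonoidAlgebra.of k G (g j)⁻¹ ⊗ₜ[k] (MonoidAlgebra.of k G (g j) * (b1 + b2))
          = ((b1 * MonoidAlgebra.of k G (g j)⁻¹) ⊗ₜ[k] MonoidAlgebra.of k G (g j)
              - MonoidAlgebra.of k G (g j)⁻¹ ⊗ₜ[k] (MonoidAlgebra.of k G (g j) * b1))
            + ((b2 * MonoidAlgebra.of k G (g j)⁻¹) ⊗ₜ[k] MonoidAlgebra.of k G (g j)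
              - MonoidAlgebra.of k G (g j)⁻¹ ⊗ₜ[k] (MonoidAlgebra.of k G (g j) * b2)) := by
          simp only [add_mul, mul_add, TensorProduct.add_tmul, TensorProduct.tmul_add]
          abel
        rw [e]; exact add_mem h1 h2
    | smul c b1 _ h1 =>
        have e : ((c • b1) * MonoidAlgebra.of k G (g j)⁻¹) ⊗ₜ[k] MonoidAlgebra.of k G (g j)
            - MonoidAlgebra.of k G (g j)⁻¹ ⊗ₜ[k] (MonoidAlgebra.of k G (g j) * (c • b1))
          = c • ((b1 * MonoidAlgebra.of k G (g j)⁻¹) ⊗ₜ[k] MonoidAlgebra.of k G (g j)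
              - MonoidAlgebra.of k G (g j)⁻¹ ⊗ₜ[k] (MonoidAlgebra.of k G (g j) * b1)) := by
          simp only [smul_mul_assoc, mul_smul_comm, TensorProduct.smul_tmul',
            TensorProduct.tmul_smul, smul_sub]
        rw [e]; exact Submodule.smul_mem rel c h1
  -- Part 4
  have part4 : ∃ ψ : ((MonoidAlgebra k G ⊗[k] MonoidAlgebra k G) ⧸ rel) →ₗ[k]
        (Fin n → MonoidAlgebra k G),
      (∀ x y : MonoidAlgebra k G, ψ (Submodule.Quotient.mk (x ⊗ₜ[k] y)) =
        fun j => x * cosetProjection k N (g j) y) ∧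
      (∀ q, (∑ j : Fin n, Submodule.Quotient.mk
          ((ψ q j * MonoidAlgebra.of k G (g j)⁻¹) ⊗ₜ[k] MonoidAlgebra.of k G (g j))) = q) := by
    classical
    let φ0 : MonoidAlgebra k G →ₗ[k] MonoidAlgebra k G →ₗ[k] (Fin n → MonoidAlgebra k G) :=
      LinearMap.mk₂ k (fun x y => fun j => x * cosetProjection k N (g j) y)
        (fun x1 x2 y => by funext j; simp only [Pi.add_apply]; rw [add_mul])
        (fun c x y => by funext j; simp only [Pi.smul_apply]; rw [smul_mul_assoc])
        (fun x y1 y2 => by funext j; simp only [Pi.add_apply]; rw [cp_add N, mul_add])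
        (fun c x y => by funext j; simp only [Pi.smul_apply]; rw [cp_smul N, mul_smul_comm])
    let φ : (MonoidAlgebra k G ⊗[k] MonoidAlgebra k G) →ₗ[k] (Fin n → MonoidAlgebra k G) :=
      TensorProduct.lift φ0
    have hφtmul : ∀ x y : MonoidAlgebra k G,
        φ (x ⊗ₜ[k] y) = fun j => x * cosetProjection k N (g j) y := by
      intro x y
      simp only [φ, TensorProduct.lift.tmul, φ0, LinearMap.mk₂_apply]
    have hker : rel ≤ LinearMap.ker φ := by
      rw [hrel]
      rw [Submodule.span_le]
      rintro z ⟨x, y, b, hb, rfl⟩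
      rw [SetLike.mem_coe, LinearMap.mem_ker, map_sub, hφtmul, hφtmul]
      rw [hB] at hb
      have : (fun j => (x * b) * cosetProjection k N (g j) y)
          = fun j => x * cosetProjection k N (g j) (b * y) := by
        funext j
        rw [cp_B_left N (g j) hb, ← mul_assoc]
      rw [this, sub_self]
    refine ⟨Submodule.liftQ rel φ hker, ?_, ?_⟩
    · intro x y
      rw [Submodule.liftQ_apply, hφtmul]
    · intro q
      obtain ⟨t, rfl⟩ := Submodule.Quotient.mk_surjective rel q
      induction t using TensorProduct.induction_on with
      | zero =>
          simp only [show (Submodule.Quotient.mk (0 : MonoidAlgebra k G ⊗[k] MonoidAlgebra k G)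
              : (MonoidAlgebra k G ⊗[k] MonoidAlgebra k G) ⧸ rel) = 0 from rfl,
            map_zero, Pi.zero_apply, zero_mul, TensorProduct.zero_tmul]
          simp
      | tmul x y =>
          rw [Submodule.liftQ_apply, hφtmul]
          simp only [← Submodule.mkQ_apply, ← map_sum]
          exact ((Submodule.Quotient.eq rel).mpr (part3 x y)).symm
      | add t1 t2 ih1 ih2 =>
          rw [Submodule.Quotient.mk_add, map_add]
          simp only [Pi.add_apply, add_mul, TensorProduct.add_tmul,
            Submodule.Quotient.mk_add, Finset.sum_add_distrib]
          rw [ih1, ih2]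
  exact ⟨part1, part2, part3, part4⟩
end

section
/- Let H be a finite dimensional Hopf algebra over a field k, A a right H-comodule algebra with coinvariant subalgebra B = A^{co H}, and suppose the Galois map β: A ⊗_B A → A ⊗ H, β(x ⊗ y) = x y_{(0)} ⊗ y_{(1)}, is bijective. Then A ⊗_B A ≅ A^n as A-B-bimodules where n = dim_k H; in particular B ⊆ A is right depth two. -/
open TensorProduct Coalgebra HopfAlgebra

/-- Let `H` be a finite dimensional Hopf algebra over a field `k`, `A` a right
`H`-comodule algebra with coinvariant subalgebra `B = A^{co H}`, and suppose the Galois map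
`β : A ⊗_B A → A ⊗ H`, `β(x ⊗ y) = x y₍₀₎ ⊗ y₍₁₎` is bijective.  Then `A ⊗_B A ≅ A^n` as
`A`-`B`-bimodules where `n = dim_k H`; in particular `B ⊆ A` is right depth two. -/
theorem hopf_galois_extension_is_depth_two
    (k : Type*) [Field k] (H : Type*) [Ring H] [HopfAlgebra k H] [FiniteDimensional k H]
    (A : Type*) [Ring A] [Algebra k A]
    -- the coaction of a right `H`-comodule algebra structure on `A`
    (ρ : A →ₐ[k] A ⊗[k] H)
    (hcoassoc : ∀ a : A,
      TensorProduct.assoc k A H H (LinearMap.rTensor H ρ.toLinearMap (ρ a)) =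
        LinearMap.lTensor A (comul (R := k)) (ρ a))
    (hcounit : ∀ a : A,
      TensorProduct.rid k A (LinearMap.lTensor A (counit (R := k)) (ρ a)) = a) :
    -- coinvariants
    ∀ (Bset : Set A), Bset = {b : A | ρ b = b ⊗ₜ[k] (1 : H)} →
    -- the relations defining `A ⊗_B A` as a quotient of `A ⊗[k] A`
    ∀ (rel : Submodule k (A ⊗[k] A)), rel = Submodule.span k
      {z : A ⊗[k] A | ∃ (x y b : A), b ∈ Bset ∧ z = (x * b) ⊗ₜ[k] y - x ⊗ₜ[k] (b * y)} →
    -- the Galois map `β` descends to a bijection `A ⊗_B A ≅ A ⊗ H`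
    (∃ βbar : ((A ⊗[k] A) ⧸ rel) →ₗ[k] A ⊗[k] H,
      (∀ x y : A, βbar (Submodule.Quotient.mk (x ⊗ₜ[k] y)) =
        (TensorProduct.map (LinearMap.mul' k A) LinearMap.id)
          ((TensorProduct.assoc k A A H).symm
            (LinearMap.lTensor A ρ.toLinearMap (x ⊗ₜ[k] y)))) ∧
      Function.Bijective βbar) →
    -- conclusion: `A ⊗_B A ≅ A^n` as `A`-`B`-bimodules, `n = dim_k H`
    ∃ e : ((A ⊗[k] A) ⧸ rel) ≃ₗ[k] (Fin (Module.finrank k H) → A),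
      ∀ (c x y : A), ∀ b ∈ Bset,
        e (Submodule.Quotient.mk ((c * x) ⊗ₜ[k] (y * b))) =
          fun i => c * (e (Submodule.Quotient.mk (x ⊗ₜ[k] y)) i) * b := by
  intro Bset hB rel hrel ⟨βbar, hβ, hbij⟩
  classical
  set n := Module.finrank k H
  let bH : Module.Basis (Fin n) k H := Module.finBasis k H
  -- the equivalence `A ⊗ H ≃ (Fin n → A)`
  let φ : (A ⊗[k] H) ≃ₗ[k] (Fin n → A) :=
    (TensorProduct.congr (LinearEquiv.refl k A) bH.equivFun).trans
      (TensorProduct.piScalarRight k k A (Fin n))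
  have hφ : ∀ (a : A) (h : H), φ (a ⊗ₜ[k] h) = fun i => bH.equivFun h i • a := by
    intro a h
    simp [φ, TensorProduct.piScalarRightHom_tmul]
  -- `φ` intertwines `(c⊗1) * z * (b⊗1)` with pointwise `c * - * b`
  have hφmul : ∀ (c b : A) (z : A ⊗[k] H),
      φ ((c ⊗ₜ[k] (1 : H)) * z * (b ⊗ₜ[k] (1 : H))) = fun i => c * φ z i * b := by
    intro c b z
    induction z using TensorProduct.induction_on with
    | zero =>
        rw [mul_zero, zero_mul, map_zero]
        funext i; simp
    | tmul a h =>
        rw [Algebra.TensorProduct.tmul_mul_tmul, Algebra.TensorProduct.tmul_mul_tmul]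
        rw [hφ, hφ]
        funext i
        simp [Algebra.mul_smul_comm, Algebra.smul_mul_assoc, mul_assoc]
    | add z₁ z₂ h₁ h₂ =>
        have : (c ⊗ₜ[k] (1 : H)) * (z₁ + z₂) * (b ⊗ₜ[k] (1 : H)) =
            (c ⊗ₜ[k] (1 : H)) * z₁ * (b ⊗ₜ[k] (1 : H)) +
              (c ⊗ₜ[k] (1 : H)) * z₂ * (b ⊗ₜ[k] (1 : H)) := by
          rw [mul_add, add_mul]
        rw [this, map_add, h₁, h₂]
        funext i; simp [mul_add, add_mul]
  -- the Galois map formula on pure tensors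
  have hβ' : ∀ x y : A, βbar (Submodule.Quotient.mk (x ⊗ₜ[k] y)) =
      (TensorProduct.map (LinearMap.mul' k A) LinearMap.id)
        ((TensorProduct.assoc k A A H).symm (x ⊗ₜ[k] ρ y)) := by
    intro x y
    rw [hβ x y]
    simp [LinearMap.lTensor_tmul]
  -- key computation: `β((c*x) ⊗ (y*b)) = (c⊗1) * β(x⊗y) * (b⊗1)` for coinvariant `b`
  have hkey : ∀ (c x b : A) (t : A ⊗[k] H),
      (TensorProduct.map (LinearMap.mul' k A) LinearMap.id)
        ((TensorProduct.assoc k A A H).symm ((c * x) ⊗ₜ[k] (t * (b ⊗ₜ[k] (1 : H))))) =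
      (c ⊗ₜ[k] (1 : H)) *
        ((TensorProduct.map (LinearMap.mul' k A) LinearMap.id)
          ((TensorProduct.assoc k A A H).symm (x ⊗ₜ[k] t))) * (b ⊗ₜ[k] (1 : H)) := by
    intro c x b t
    induction t using TensorProduct.induction_on with
    | zero =>
        rw [zero_mul, tmul_zero, tmul_zero, LinearEquiv.map_zero, LinearMap.map_zero,
          mul_zero, zero_mul]
    | tmul a h =>
        rw [Algebra.TensorProduct.tmul_mul_tmul]
        simp only [TensorProduct.assoc_symm_tmul, TensorProduct.map_tmul,
          LinearMap.mul'_apply, LinearMap.id_coe, id_eq,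
          Algebra.TensorProduct.tmul_mul_tmul]
        rw [mul_one, one_mul, mul_one]
        congr 1
        rw [mul_assoc, mul_assoc, mul_assoc]
    | add t₁ t₂ h₁ h₂ =>
        rw [add_mul, tmul_add, map_add, map_add, tmul_add, map_add, map_add, h₁, h₂,
          mul_add, add_mul]
  -- assemble the equivalence
  refine ⟨(LinearEquiv.ofBijective βbar hbij).trans φ, ?_⟩
  intro c x y b hb
  have hρb : ρ b = b ⊗ₜ[k] (1 : H) := by rw [hB] at hb; exact hb
  have : βbar (Submodule.Quotient.mk ((c * x) ⊗ₜ[k] (y * b))) =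
      (c ⊗ₜ[k] (1 : H)) * βbar (Submodule.Quotient.mk (x ⊗ₜ[k] y)) * (b ⊗ₜ[k] (1 : H)) := by
    rw [hβ' (c * x) (y * b), hβ' x y, map_mul, hρb]
    exact hkey c x b (ρ y)
  simp only [LinearEquiv.trans_apply, LinearEquiv.ofBijective_apply]
  rw [this, hφmul]
end

section
/- Let H be a semisimple Hopf algebra over an algebraically closed field of characteristic zero and K a normal Hopf subalgebra (i.e., a_{(1)} K S(a_{(2)}) ⊆ K for all a ∈ H). Then the two-sided integral Λ_K of K is central in H. -/
open TensorProduct Coalgebra HopfAlgebra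

/-- In a semisimple ring, an element `u` with `u H u = 0` is zero. -/
private lemma eq_zero_of_mul_mul_self {H : Type*} [Ring H] [IsSemisimpleRing H]
    (u : H) (h : ∀ x : H, u * x * u = 0) : u = 0 := by
  classical
  set I : Submodule H H := Submodule.span H (Set.range fun x => u * x) with hI
  have huI : u ∈ I := Submodule.subset_span ⟨1, mul_one u⟩
  have key : ∀ y ∈ I, ∀ z : H, u * z * y = 0 := by
    intro y hy
    induction hy using Submodule.span_induction with
    | mem y hy =>
      obtain ⟨x, rfl⟩ := hy
      intro z
      rw [← mul_assoc, h z, zero_mul]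
    | zero => intro z; rw [mul_zero]
    | add p q _ _ hp hq => intro z; rw [mul_add, hp z, hq z, add_zero]
    | smul c y _ ih =>
      intro z
      have : u * z * (c • y) = u * (z * c) * y := by
        rw [smul_eq_mul, ← mul_assoc, mul_assoc u z c]
      rw [this, ih (z * c)]
  obtain ⟨q, hq⟩ := exists_isCompl I
  set π := Submodule.projectionOnto I q hq with hπ
  have h1 : ((π u : I) : H) = u := by
    rw [show (u : H) = ((⟨u, huI⟩ : I) : H) from rfl, Submodule.projectionOnto_apply_left]
  have h2 : π u = u • π 1 := by
    rw [← map_smul]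
    congr 1
    simp [smul_eq_mul]
  have h3 : u = u * ((π 1 : I) : H) := by
    conv_lhs => rw [← h1]
    rw [h2]
    rfl
  have h4 := key ((π 1 : I) : H) (π 1).2 1
  rw [mul_one] at h4
  rw [h3, h4]

/-- Let `H` be a semisimple Hopf algebra over an algebraically closed field of
characteristic zero and `K` a normal Hopf subalgebra (`a₍₁₎ K S(a₍₂₎) ⊆ K` for all `a ∈ H`).
Then the two-sided integral `Λ_K` of `K` is central in `H`. -/
theorem normal_hopf_subalgebra_integral_central
    (k : Type*) [Field k] [IsAlgClosed k] [CharZero k]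
    (H : Type*) [Ring H] [HopfAlgebra k H] [FiniteDimensional k H] [IsSemisimpleRing H]
    (K : Subalgebra k H)
    -- `K` is a Hopf subalgebra
    (hΔ : ∀ x ∈ K, comul (R := k) x ∈
      LinearMap.range (TensorProduct.map K.val.toLinearMap K.val.toLinearMap))
    (hSK : ∀ x ∈ K, antipode (R := k) x ∈ K)
    -- `K` is normal: invariance under the left adjoint action `a ▷ x = a₍₁₎ x S(a₍₂₎)`
    (hnormal : ∀ a : H, ∀ x ∈ K,
      LinearMap.mul' k H
        ((TensorProduct.map (LinearMap.mulRight k x) (antipode (R := k)))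
          (comul (R := k) a)) ∈ K)
    -- `Λ` is a nonzero two-sided integral of `K`, fixed by the antipode
    (Λ : H) (hΛK : Λ ∈ K) (hΛ0 : Λ ≠ 0)
    (hΛl : ∀ x ∈ K, x * Λ = (counit (R := k) x : k) • Λ)
    (hΛr : ∀ x ∈ K, Λ * x = (counit (R := k) x : k) • Λ)
    (hSΛ : antipode (R := k) Λ = Λ) :
    ∀ a : H, a * Λ = Λ * a := by
  classical
  -- the adjoint-action-on-`Λ` map
  set f : H →ₗ[k] H := LinearMap.mul' k H ∘ₗ
      TensorProduct.map (LinearMap.mulRight k Λ) (antipode (R := k)) ∘ₗ comul (R := k)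
    with hf_def
  have hfK : ∀ b : H, f b ∈ K := fun b => hnormal b Λ hΛK
  -- `f b = ∑ (b₍₁₎ * Λ) * S b₍₂₎` for any representation of `comul b`
  have hfrepr : ∀ (b : H) (ρ : Coalgebra.Repr k b (H × H)),
      f b = ∑ j ∈ ρ.index, (ρ.left j * Λ) * antipode (R := k) (ρ.right j) := by
    intro b ρ
    rw [hf_def]
    simp only [LinearMap.comp_apply]
    rw [← ρ.eq]
    simp [map_sum]
  -- `ε ∘ S = ε`
  have hεS : ∀ b : H, counit (R := k) (antipode (R := k) b) = counit (R := k) b := by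
    intro b
    have h1 := sum_antipode_mul_eq_algebraMap_counit (R := k) (ℛ k b)
    have h2 := congrArg (counit (R := k)) h1
    simp only [map_sum, Bialgebra.counit_mul, Bialgebra.counit_algebraMap] at h2
    have h3 := sum_tmul_counit_eq (R := k) (ℛ k b)
    have h4 := congrArg (fun t => (LinearMap.mul' k k)
      ((TensorProduct.map ((counit (R := k)) ∘ₗ (antipode (R := k) : H →ₗ[k] H))
        (LinearMap.id : k →ₗ[k] k)) t)) h3
    simp only [map_sum, TensorProduct.map_tmul, LinearMap.mul'_apply, LinearMap.comp_apply,
      LinearMap.id_coe, id_eq, mul_one] at h4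
    rw [← h2, ← h4]
  -- `ε (f b) = ε Λ * ε b`
  have hεf : ∀ b : H, counit (R := k) (f b) = counit (R := k) Λ * counit (R := k) b := by
    intro b
    rw [hfrepr b (ℛ k b), map_sum]
    simp only [Bialgebra.counit_mul, hεS]
    have h3 := sum_tmul_counit_eq (R := k) (ℛ k b)
    have h4 := congrArg (fun t => (LinearMap.mul' k k)
      ((TensorProduct.map (counit (R := k)) (LinearMap.id : k →ₗ[k] k)) t)) h3
    simp only [map_sum, TensorProduct.map_tmul, LinearMap.mul'_apply, LinearMap.id_coe, id_eq,
      mul_one] at h4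
    rw [← h4, Finset.mul_sum]
    apply Finset.sum_congr rfl
    intro j _
    ring
  -- Claim 1: `x * Λ = ∑ f(x₍₁₎) * x₍₂₎`
  have claim1 : ∀ (x : H) (ρ : Coalgebra.Repr k x (H × H)),
      x * Λ = ∑ i ∈ ρ.index, f (ρ.left i) * ρ.right i := by
    intro x ρ
    have coas := Coalgebra.sum_tmul_tmul_eq (R := k) ρ
      (fun i => ℛ k (ρ.left i)) (fun i => ℛ k (ρ.right i))
    set G : H ⊗[k] (H ⊗[k] H) →ₗ[k] H :=
      LinearMap.mul' k H ∘ₗ TensorProduct.map (LinearMap.mulRight k Λ)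
        (LinearMap.mul' k H ∘ₗ TensorProduct.map (antipode (R := k)) LinearMap.id) with hG_def
    have hG := congrArg G coas
    simp only [map_sum, hG_def, LinearMap.comp_apply, TensorProduct.map_tmul,
      LinearMap.mul'_apply, LinearMap.mulRight_apply, LinearMap.id_coe, id_eq] at hG
    have hR : ∀ i ∈ ρ.index,
        ∑ j ∈ (ℛ k (ρ.right i)).index, (ρ.left i * Λ) *
          (antipode (R := k) ((ℛ k (ρ.right i)).left j) * (ℛ k (ρ.right i)).right j) =
        counit (R := k) (ρ.right i) • (ρ.left i * Λ) := by
      intro i _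
      rw [← Finset.mul_sum, sum_antipode_mul_eq_smul, mul_smul_comm, mul_one]
    have hL : ∀ i ∈ ρ.index,
        ∑ j ∈ (ℛ k (ρ.left i)).index, ((ℛ k (ρ.left i)).left j * Λ) *
          (antipode (R := k) ((ℛ k (ρ.left i)).right j) * ρ.right i) =
        f (ρ.left i) * ρ.right i := by
      intro i _
      rw [hfrepr (ρ.left i) (ℛ k (ρ.left i)), Finset.sum_mul]
      exact Finset.sum_congr rfl fun j _ => (mul_assoc _ _ _).symm
    rw [Finset.sum_congr rfl hL, Finset.sum_congr rfl hR] at hG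
    have hx : ∑ i ∈ ρ.index, counit (R := k) (ρ.right i) • ρ.left i = x := by
      have h4 := congrArg (TensorProduct.rid k H) (sum_tmul_counit_eq (R := k) ρ)
      simp only [map_sum, TensorProduct.rid_tmul, one_smul] at h4
      exact h4
    calc x * Λ = (∑ i ∈ ρ.index, counit (R := k) (ρ.right i) • ρ.left i) * Λ := by rw [hx]
      _ = ∑ i ∈ ρ.index, counit (R := k) (ρ.right i) • (ρ.left i * Λ) := by
          rw [Finset.sum_mul]
          exact Finset.sum_congr rfl fun i _ => (smul_mul_assoc _ _ _)
      _ = ∑ i ∈ ρ.index, f (ρ.left i) * ρ.right i := hG.symm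
  -- Key identity: `Λ * x * Λ = ε Λ • (Λ * x)`
  have keyB : ∀ x : H, Λ * x * Λ = counit (R := k) Λ • (Λ * x) := by
    intro x
    rw [mul_assoc, claim1 x (ℛ k x), Finset.mul_sum]
    have step : ∀ i ∈ (ℛ k x).index,
        Λ * (f ((ℛ k x).left i) * (ℛ k x).right i) =
        (counit (R := k) Λ * counit (R := k) ((ℛ k x).left i)) • (Λ * (ℛ k x).right i) := by
      intro i _
      rw [← mul_assoc, hΛr _ (hfK _), hεf, smul_mul_assoc]
    rw [Finset.sum_congr rfl step]
    have hx' : ∑ i ∈ (ℛ k x).index, counit (R := k) ((ℛ k x).left i) • (ℛ k x).right i = x := by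
      have h4 := congrArg (TensorProduct.lid k H) (sum_counit_tmul_eq (R := k) (ℛ k x))
      simp only [map_sum, TensorProduct.lid_tmul, one_smul] at h4
      exact h4
    calc ∑ i ∈ (ℛ k x).index,
          (counit (R := k) Λ * counit (R := k) ((ℛ k x).left i)) • (Λ * (ℛ k x).right i)
        = counit (R := k) Λ •
            (Λ * ∑ i ∈ (ℛ k x).index, counit (R := k) ((ℛ k x).left i) • (ℛ k x).right i) := by
          rw [Finset.mul_sum, Finset.smul_sum]
          exact Finset.sum_congr rfl fun i _ => by rw [mul_smul_comm, smul_smul]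
      _ = counit (R := k) Λ • (Λ * x) := by rw [hx']
  -- conclude via semisimplicity
  intro a
  have hc : ∀ z : H, (a * Λ - Λ * a) * z * (a * Λ - Λ * a) = 0 := by
    intro z
    have e1 : Λ * (z * (a * Λ)) = counit (R := k) Λ • (Λ * (z * a)) := by
      simpa [mul_assoc] using keyB (z * a)
    have e2 : Λ * (z * (Λ * a)) = counit (R := k) Λ • (Λ * (z * a)) := by
      simpa [mul_assoc, smul_mul_assoc] using congrArg (· * a) (keyB z)
    have e3 : Λ * (a * (z * (a * Λ))) = counit (R := k) Λ • (Λ * (a * (z * a))) := by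
      simpa [mul_assoc] using keyB (a * (z * a))
    have e4 : Λ * (a * (z * (Λ * a))) = counit (R := k) Λ • (Λ * (a * (z * a))) := by
      simpa [mul_assoc, smul_mul_assoc] using congrArg (· * a) (keyB (a * z))
    simp only [sub_mul, mul_sub, mul_assoc]
    rw [e1, e2, e3, e4]
    abel
  have hu := eq_zero_of_mul_mul_self (a * Λ - Λ * a) hc
  exact sub_eq_zero.mp hu
end

section
/- Let A|B be a Frobenius extension with Frobenius homomorphism E: A → B and dual bases {x_i}, {y_i}, and suppose A|B is left depth two with quasibases β_i ∈ End_{B-B}(A), t_i ∈ (A ⊗_B A)^B. Then the elements {t_i} and {Σ_j β_i(x_j) e_1 y_j} (all lying in T = (A ⊗_B A)^B) are dual bases for the Frobenius homomorphism E_A: A ⊗_B A → A, E_A(x e_1 y) = xy, where e_1 = 1 ⊗_B 1. -/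
open TensorProduct

/-- Let `A|B` be a Frobenius extension with Frobenius homomorphism `E : A → B`
and dual bases `{x_i}, {y_i}`, and suppose `A|B` is left depth two with quasibases
`β_i ∈ End_{B-B}(A)`, `t_i ∈ (A ⊗_B A)^B`.  Then the elements `{t_i}` and
`{β̃_i = Σ_j β_i(x_j) e₁ y_j}` all lie in `T = (A ⊗_B A)^B` and are dual bases for the
Frobenius homomorphism `E_A : A ⊗_B A → A`, `E_A(x e₁ y) = xy`:
`Σ_i t_i E_A(β̃_i (x e₁ y)) = x e₁ y`, where
`E_A(β̃_i (x e₁ y)) = Σ_j β_i(x_j) E(y_j x) y`. -/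
theorem frobenius_d2_quasibases_give_dual_bases_for_EA
    (A : Type*) [Ring A] (B : Subring A)
    (rel : Submodule ℤ (A ⊗[ℤ] A))
    (hrel : rel = Submodule.span ℤ {z | ∃ (x y : A) (b : A), b ∈ B ∧
      z = (x * b) ⊗ₜ[ℤ] y - x ⊗ₜ[ℤ] (b * y)})
    -- the Frobenius system `(E, x_i, y_i)`
    (E : A →+ A) (hEB : ∀ a, E a ∈ B)
    (hEbimod : ∀ (b b' : A), b ∈ B → b' ∈ B → ∀ a, E (b * a * b') = b * E a * b')
    (m : ℕ) (xs ys : Fin m → A)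
    (hdual₁ : ∀ a : A, ∑ i, xs i * E (ys i * a) = a)
    (hdual₂ : ∀ a : A, ∑ i, E (a * xs i) * ys i = a)
    -- a left depth two quasibasis `(β_i, t_i)`
    (n : ℕ) (β : Fin n → (A →+ A)) (t : Fin n → A ⊗[ℤ] A)
    (hβ : ∀ (i : Fin n) (b b' : A), b ∈ B → b' ∈ B →
      ∀ a, β i (b * a * b') = b * β i a * b')
    (ht : ∀ (i : Fin n), ∀ b ∈ B,
      LinearMap.rTensor A (LinearMap.mulLeft ℤ b) (t i)
        - LinearMap.lTensor A (LinearMap.mulRight ℤ b) (t i) ∈ rel)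
    (hqb : ∀ x y : A,
      x ⊗ₜ[ℤ] y - ∑ i, LinearMap.lTensor A (LinearMap.mulRight ℤ (β i x * y)) (t i) ∈ rel) :
    -- each `β̃_i = Σ_j β_i(x_j) ⊗_B y_j` lies in the centralizer `T = (A ⊗_B A)^B`
    (∀ (i : Fin n), ∀ b ∈ B,
      LinearMap.rTensor A (LinearMap.mulLeft ℤ b) (∑ j, β i (xs j) ⊗ₜ[ℤ] ys j)
        - LinearMap.lTensor A (LinearMap.mulRight ℤ b) (∑ j, β i (xs j) ⊗ₜ[ℤ] ys j) ∈ rel) ∧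
    -- dual bases equation for `E_A` on the generators `x e₁ y` of `A ⊗_B A`
    (∀ x y : A,
      (∑ i, LinearMap.lTensor A
          (LinearMap.mulRight ℤ (∑ j, β i (xs j) * E (ys j * x) * y)) (t i))
        - x ⊗ₜ[ℤ] y ∈ rel) := by
  have key : ∀ (i : Fin n) (x : A), ∑ j, β i (xs j) * E (ys j * x) = β i x := by
    intro i x
    have h : ∀ j, β i (xs j) * E (ys j * x) = β i (xs j * E (ys j * x)) := by
      intro j
      have := hβ i 1 (E (ys j * x)) B.one_mem (hEB _) (xs j)
      simpa using this.symm
    simp_rw [h, ← map_sum, hdual₁]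
  constructor
  · intro i b hb
    simp only [map_sum, LinearMap.rTensor_tmul, LinearMap.lTensor_tmul,
      LinearMap.mulLeft_apply, LinearMap.mulRight_apply]
    have e1 : ∀ j, b * β i (xs j) = ∑ k, β i (xs k) * E (ys k * b * xs j) := by
      intro j
      have hb1 := hβ i b 1 hb B.one_mem (xs j)
      rw [mul_one, mul_one] at hb1
      calc b * β i (xs j) = β i (b * xs j) := hb1.symm
        _ = β i (∑ k, xs k * E (ys k * (b * xs j))) := by rw [hdual₁]
        _ = ∑ k, β i (xs k) * E (ys k * b * xs j) := by
            rw [map_sum]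
            refine Finset.sum_congr rfl fun k _ => ?_
            have := hβ i 1 (E (ys k * (b * xs j))) B.one_mem (hEB _) (xs k)
            simpa [mul_assoc] using this
    have e2 : ∀ k, ys k * b = ∑ j, E (ys k * b * xs j) * ys j := fun k =>
      (hdual₂ (ys k * b)).symm
    have s1 : ∑ j, (b * β i (xs j)) ⊗ₜ[ℤ] ys j
        = ∑ j, ∑ k, (β i (xs k) * E (ys k * b * xs j)) ⊗ₜ[ℤ] ys j := by
      refine Finset.sum_congr rfl fun j _ => ?_
      rw [e1, sum_tmul]
    have s2 : ∑ k, β i (xs k) ⊗ₜ[ℤ] (ys k * b)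
        = ∑ j, ∑ k, β i (xs k) ⊗ₜ[ℤ] (E (ys k * b * xs j) * ys j) := by
      rw [Finset.sum_comm]
      refine Finset.sum_congr rfl fun k _ => ?_
      conv_lhs => rw [e2 k, tmul_sum]
    rw [s1, s2, ← Finset.sum_sub_distrib]
    refine Submodule.sum_mem rel fun j _ => ?_
    rw [← Finset.sum_sub_distrib]
    refine Submodule.sum_mem rel fun k _ => ?_
    rw [hrel]
    exact Submodule.subset_span ⟨β i (xs k), ys j, E (ys k * b * xs j), hEB _, rfl⟩
  · intro x y
    have h : ∀ i : Fin n, (∑ j, β i (xs j) * E (ys j * x) * y) = β i x * y := by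
      intro i
      rw [← Finset.sum_mul, key]
    simp_rw [h]
    have := hqb x y
    rw [hrel] at this ⊢
    simpa using Submodule.neg_mem _ this
end

section
/- In a weak Hopf algebra W, the antipode relates the projections by Π^L = S ∘ Π̄^L and Π^R = S ∘ Π̄^R, and moreover S̄(a_{(2)}) a_{(1)} = Π̄^R(a) and a_{(2)} S̄(a_{(1)}) = Π̄^L(a) for all a ∈ W, where S̄ is the inverse of S. -/
set_option synthInstance.maxHeartbeats 1000000
set_option maxHeartbeats 4000000


open TensorProduct

noncomputable section

variable (k : Type*) [Field k] (W : Type*) [Ring W] [Algebra k W]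

/-- The target projection `Π^L(x) = ε(1₍₁₎ x) 1₍₂₎` of a weak bialgebra. -/
def wPiL (Δ : W →ₗ[k] W ⊗[k] W) (ε : W →ₗ[k] k) (x : W) : W :=
  TensorProduct.lid k W (LinearMap.rTensor W (ε ∘ₗ LinearMap.mulRight k x) (Δ 1))

/-- The source projection `Π^R(x) = 1₍₁₎ ε(x 1₍₂₎)` of a weak bialgebra. -/
def wPiR (Δ : W →ₗ[k] W ⊗[k] W) (ε : W →ₗ[k] k) (x : W) : W :=
  TensorProduct.rid k W (LinearMap.lTensor W (ε ∘ₗ LinearMap.mulLeft k x) (Δ 1))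

/-- The projection `Π̄^L(x) = 1₍₁₎ ε(1₍₂₎ x)` of a weak bialgebra. -/
def wPiLbar (Δ : W →ₗ[k] W ⊗[k] W) (ε : W →ₗ[k] k) (x : W) : W :=
  TensorProduct.rid k W (LinearMap.lTensor W (ε ∘ₗ LinearMap.mulRight k x) (Δ 1))

/-- The projection `Π̄^R(x) = ε(x 1₍₁₎) 1₍₂₎` of a weak bialgebra. -/
def wPiRbar (Δ : W →ₗ[k] W ⊗[k] W) (ε : W →ₗ[k] k) (x : W) : W :=
  TensorProduct.lid k W (LinearMap.rTensor W (ε ∘ₗ LinearMap.mulLeft k x) (Δ 1))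

/-- In a weak Hopf algebra `W`, the antipode relates the projections by
`Π^L = S ∘ Π̄^L` and `Π^R = S ∘ Π̄^R`; moreover `S̄(a₍₂₎) a₍₁₎ = Π̄^R(a)` and
`a₍₂₎ S̄(a₍₁₎) = Π̄^L(a)` for all `a ∈ W`, where `S̄` is the inverse of `S`. -/
theorem weak_hopf_algebra_antipode_projection_identities
    (Δ : W →ₗ[k] W ⊗[k] W) (ε : W →ₗ[k] k) (S Sbar : W →ₗ[k] W)
    -- coalgebra axioms
    (hcoassoc : ∀ x : W,
      TensorProduct.assoc k W W W (LinearMap.rTensor W Δ (Δ x)) = LinearMap.lTensor W Δ (Δ x))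
    (hcounitl : ∀ x : W, TensorProduct.lid k W (LinearMap.rTensor W ε (Δ x)) = x)
    (hcounitr : ∀ x : W, TensorProduct.rid k W (LinearMap.lTensor W ε (Δ x)) = x)
    -- `Δ` is multiplicative
    (hΔmul : ∀ a b : W, Δ (a * b) = Δ a * Δ b)
    -- weak comultiplicativity of the unit:
    -- `Δ²(1) = (Δ(1) ⊗ 1)(1 ⊗ Δ(1)) = (1 ⊗ Δ(1))(Δ(1) ⊗ 1)`
    (hweakunit :
      LinearMap.rTensor W Δ (Δ 1)
          = (Δ 1 ⊗ₜ[k] (1 : W)) * ((TensorProduct.assoc k W W W).symm ((1 : W) ⊗ₜ[k] Δ 1)) ∧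
      LinearMap.rTensor W Δ (Δ 1)
          = ((TensorProduct.assoc k W W W).symm ((1 : W) ⊗ₜ[k] Δ 1)) * (Δ 1 ⊗ₜ[k] (1 : W)))
    -- weak multiplicativity of the counit:
    -- `ε(abc) = ε(a b₍₁₎) ε(b₍₂₎ c) = ε(a b₍₂₎) ε(b₍₁₎ c)`
    (hweakcounit : ∀ a b c : W,
      ε (a * b * c)
          = TensorProduct.lid k k
              (TensorProduct.map (ε ∘ₗ LinearMap.mulLeft k a) (ε ∘ₗ LinearMap.mulRight k c)
                (Δ b)) ∧
      ε (a * b * c)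
          = TensorProduct.lid k k
              (TensorProduct.map (ε ∘ₗ LinearMap.mulRight k c) (ε ∘ₗ LinearMap.mulLeft k a)
                (Δ b)))
    -- antipode axioms: `S(x₍₁₎)x₍₂₎ = Π^R(x)`, `x₍₁₎S(x₍₂₎) = Π^L(x)`,
    -- `S(x₍₁₎)x₍₂₎S(x₍₃₎) = S(x)`
    (hS1 : ∀ x : W, LinearMap.mul' k W (LinearMap.rTensor W S (Δ x)) = wPiR k W Δ ε x)
    (hS2 : ∀ x : W, LinearMap.mul' k W (LinearMap.lTensor W S (Δ x)) = wPiL k W Δ ε x)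
    (hS3 : ∀ x : W,
      LinearMap.mul' k W
        (TensorProduct.map (LinearMap.mul' k W ∘ₗ LinearMap.rTensor W S) S
          (LinearMap.rTensor W Δ (Δ x))) = S x)
    -- `S` is bijective with inverse `S̄`
    (hSbar₁ : Function.LeftInverse Sbar S) (hSbar₂ : Function.RightInverse Sbar S) :
    (∀ x : W, wPiL k W Δ ε x = S (wPiLbar k W Δ ε x)) ∧
    (∀ x : W, wPiR k W Δ ε x = S (wPiRbar k W Δ ε x)) ∧
    (∀ a : W, LinearMap.mul' k W
        (LinearMap.rTensor W Sbar (TensorProduct.comm k W W (Δ a))) = wPiRbar k W Δ ε a) ∧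
    (∀ a : W, LinearMap.mul' k W
        (LinearMap.lTensor W Sbar (TensorProduct.comm k W W (Δ a))) = wPiLbar k W Δ ε a) := by
  classical
  choose T hT using fun w : W => TensorProduct.exists_finset (Δ w)
  -- sum formulas for the projections
  have hπLs : ∀ x : W, wPiL k W Δ ε x = ∑ p ∈ T 1, ε (p.1 * x) • p.2 := by
    intro x
    rw [wPiL, hT 1, map_sum, map_sum]
    simp [LinearMap.rTensor_tmul, TensorProduct.lid_tmul]
  have hπRs : ∀ x : W, wPiR k W Δ ε x = ∑ p ∈ T 1, ε (x * p.2) • p.1 := by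
    intro x
    rw [wPiR, hT 1, map_sum, map_sum]
    simp [LinearMap.lTensor_tmul, TensorProduct.rid_tmul]
  have hπLbars : ∀ x : W, wPiLbar k W Δ ε x = ∑ p ∈ T 1, ε (p.2 * x) • p.1 := by
    intro x
    rw [wPiLbar, hT 1, map_sum, map_sum]
    simp [LinearMap.lTensor_tmul, TensorProduct.rid_tmul]
  have hπRbars : ∀ x : W, wPiRbar k W Δ ε x = ∑ p ∈ T 1, ε (x * p.1) • p.2 := by
    intro x
    rw [wPiRbar, hT 1, map_sum, map_sum]
    simp [LinearMap.rTensor_tmul, TensorProduct.lid_tmul]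
  -- weak counit, specialized at `b = 1`
  have hwc1 : ∀ a c : W, ε (a * c) = ∑ p ∈ T 1, ε (a * p.1) * ε (p.2 * c) := by
    intro a c
    have h := (hweakcounit a 1 c).1
    rw [mul_one] at h
    rw [h, hT 1, map_sum, map_sum]
    simp [TensorProduct.map_tmul, TensorProduct.lid_tmul, smul_eq_mul]
  have hwc2 : ∀ a c : W, ε (a * c) = ∑ p ∈ T 1, ε (a * p.2) * ε (p.1 * c) := by
    intro a c
    have h := (hweakcounit a 1 c).2
    rw [mul_one] at h
    rw [h, hT 1, map_sum, map_sum]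
    simp [TensorProduct.map_tmul, TensorProduct.lid_tmul, smul_eq_mul, mul_comm]
  -- the two weak-unit expansions
  have WU1 : LinearMap.rTensor W Δ (Δ 1)
      = ∑ q ∈ T 1, ∑ p ∈ T 1, (q.1 ⊗ₜ[k] (q.2 * p.1)) ⊗ₜ[k] p.2 := by
    rw [hweakunit.1, hT 1, TensorProduct.sum_tmul, TensorProduct.tmul_sum, map_sum,
      Finset.sum_mul_sum]
    simp [TensorProduct.assoc_symm_tmul, Algebra.TensorProduct.tmul_mul_tmul]
  have WU2 : LinearMap.rTensor W Δ (Δ 1)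
      = ∑ p ∈ T 1, ∑ q ∈ T 1, (q.1 ⊗ₜ[k] (p.1 * q.2)) ⊗ₜ[k] p.2 := by
    rw [hweakunit.2, hT 1, TensorProduct.sum_tmul, TensorProduct.tmul_sum, map_sum,
      Finset.sum_mul_sum]
    simp [TensorProduct.assoc_symm_tmul, Algebra.TensorProduct.tmul_mul_tmul]
  have LT1 : LinearMap.lTensor W Δ (Δ 1)
      = ∑ q ∈ T 1, ∑ p ∈ T 1, q.1 ⊗ₜ[k] ((q.2 * p.1) ⊗ₜ[k] p.2) := by
    rw [← hcoassoc 1, WU1, map_sum]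
    simp [TensorProduct.assoc_tmul]
  have LT2 : LinearMap.lTensor W Δ (Δ 1)
      = ∑ p ∈ T 1, ∑ q ∈ T 1, q.1 ⊗ₜ[k] ((p.1 * q.2) ⊗ₜ[k] p.2) := by
    rw [← hcoassoc 1, WU2, map_sum]
    simp [TensorProduct.assoc_tmul]
  -- the key `(*)` identity
  have hstar : (∑ p ∈ T 1, ∑ q ∈ T 1, ε (p.1 * q.2) • (q.1 ⊗ₜ[k] p.2)) = Δ 1 := by
    set G : W ⊗[k] (W ⊗[k] W) →ₗ[k] W ⊗[k] W :=
      LinearMap.lTensor W ((TensorProduct.lid k W).toLinearMap ∘ₗ LinearMap.rTensor W ε) with hGdef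
    have h1 : G (LinearMap.lTensor W Δ (Δ 1))
        = ∑ p ∈ T 1, ∑ q ∈ T 1, ε (p.1 * q.2) • (q.1 ⊗ₜ[k] p.2) := by
      rw [LT2, map_sum]
      refine Finset.sum_congr rfl fun p _ => ?_
      rw [map_sum]
      refine Finset.sum_congr rfl fun q _ => ?_
      rw [hGdef, LinearMap.lTensor_tmul]
      simp only [LinearMap.coe_comp, LinearEquiv.coe_coe, Function.comp_apply,
        LinearMap.rTensor_tmul, TensorProduct.lid_tmul, TensorProduct.tmul_smul]
    have h2 : G (LinearMap.lTensor W Δ (Δ 1)) = Δ 1 := by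
      conv_lhs => rw [hT 1, map_sum, map_sum]
      conv_rhs => rw [hT 1]
      refine Finset.sum_congr rfl fun p _ => ?_
      rw [hGdef, LinearMap.lTensor_tmul, LinearMap.lTensor_tmul]
      simp only [LinearMap.coe_comp, LinearEquiv.coe_coe, Function.comp_apply]
      rw [hcounitl p.2]
    rw [← h1, h2]
  -- `(K9)` and `(K10)`
  have hK9 : (∑ p ∈ T 1, wPiR k W Δ ε p.1 ⊗ₜ[k] p.2) = Δ 1 := by
    rw [← hstar]
    refine Finset.sum_congr rfl fun p _ => ?_
    rw [hπRs p.1, TensorProduct.sum_tmul]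
    refine Finset.sum_congr rfl fun q _ => ?_
    rw [TensorProduct.smul_tmul']
  have hK10 : (∑ p ∈ T 1, p.1 ⊗ₜ[k] wPiL k W Δ ε p.2) = Δ 1 := by
    rw [← hstar, Finset.sum_comm]
    refine Finset.sum_congr rfl fun p _ => ?_
    rw [hπLs p.2, TensorProduct.tmul_sum]
    refine Finset.sum_congr rfl fun q _ => ?_
    rw [TensorProduct.tmul_smul]
  -- `(K27)` : Δ (Π̄^L x) = ∑ 1₁ ⊗ (Π̄^L x * 1₂)
  have hK27 : ∀ x : W, Δ (wPiLbar k W Δ ε x)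
      = ∑ p ∈ T 1, p.1 ⊗ₜ[k] (wPiLbar k W Δ ε x * p.2) := by
    intro x
    set ψ : (W ⊗[k] W) ⊗[k] W →ₗ[k] W ⊗[k] W :=
      (TensorProduct.rid k (W ⊗[k] W)).toLinearMap ∘ₗ
        LinearMap.lTensor (W ⊗[k] W) (ε ∘ₗ LinearMap.mulRight k x) with hψdef
    have hψap : ∀ (A : W ⊗[k] W) (c : W), ψ (A ⊗ₜ[k] c) = ε (c * x) • A := by
      intro A c
      simp [hψdef, LinearMap.lTensor_tmul, TensorProduct.rid_tmul]
    have h1 : ψ (LinearMap.rTensor W Δ (Δ 1)) = Δ (wPiLbar k W Δ ε x) := by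
      conv_lhs => rw [hT 1, map_sum, map_sum]
      rw [hπLbars, map_sum]
      refine Finset.sum_congr rfl fun p _ => ?_
      rw [LinearMap.rTensor_tmul, hψap, map_smul]
    have h2 : ψ (LinearMap.rTensor W Δ (Δ 1))
        = ∑ p ∈ T 1, p.1 ⊗ₜ[k] (wPiLbar k W Δ ε x * p.2) := by
      rw [WU2]
      simp only [map_sum, hψap]
      rw [Finset.sum_comm]
      refine Finset.sum_congr rfl fun p _ => ?_
      rw [hπLbars, Finset.sum_mul, TensorProduct.tmul_sum]
      exact Finset.sum_congr rfl fun q _ => by rw [smul_mul_assoc, TensorProduct.tmul_smul]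
    rw [← h1, h2]
  -- `(K28)` : Δ (Π̄^R x) = ∑ (Π̄^R x * 1₁) ⊗ 1₂
  have hK28 : ∀ x : W, Δ (wPiRbar k W Δ ε x)
      = ∑ p ∈ T 1, (wPiRbar k W Δ ε x * p.1) ⊗ₜ[k] p.2 := by
    intro x
    set θ : W ⊗[k] (W ⊗[k] W) →ₗ[k] W ⊗[k] W :=
      (TensorProduct.lid k (W ⊗[k] W)).toLinearMap ∘ₗ
        LinearMap.rTensor (W ⊗[k] W) (ε ∘ₗ LinearMap.mulLeft k x) with hθdef
    have hθap : ∀ (c : W) (A : W ⊗[k] W), θ (c ⊗ₜ[k] A) = ε (x * c) • A := by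
      intro c A
      simp [hθdef, LinearMap.rTensor_tmul, TensorProduct.lid_tmul]
    have h1 : θ (LinearMap.lTensor W Δ (Δ 1)) = Δ (wPiRbar k W Δ ε x) := by
      conv_lhs => rw [hT 1, map_sum, map_sum]
      rw [hπRbars, map_sum]
      refine Finset.sum_congr rfl fun p _ => ?_
      rw [LinearMap.lTensor_tmul, hθap, map_smul]
    have h2 : θ (LinearMap.lTensor W Δ (Δ 1))
        = ∑ p ∈ T 1, (wPiRbar k W Δ ε x * p.1) ⊗ₜ[k] p.2 := by
      rw [LT1]
      simp only [map_sum, hθap]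
      rw [Finset.sum_comm]
      refine Finset.sum_congr rfl fun p _ => ?_
      rw [hπRbars, Finset.sum_mul, TensorProduct.sum_tmul]
      exact Finset.sum_congr rfl fun q _ => by
        rw [smul_mul_assoc, TensorProduct.smul_tmul']
    rw [← h1, h2]
  -- (K6) : Π^L = Π^L ∘ Π̄^L
  have hK6 : ∀ x : W, wPiL k W Δ ε x = wPiL k W Δ ε (wPiLbar k W Δ ε x) := by
    intro x
    rw [hπLs, hπLs]
    refine Finset.sum_congr rfl fun p _ => ?_
    have h1 : ε (p.1 * wPiLbar k W Δ ε x) = ∑ q ∈ T 1, ε (q.2 * x) * ε (p.1 * q.1) := by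
      rw [hπLbars, Finset.mul_sum, map_sum]
      refine Finset.sum_congr rfl fun q _ => ?_
      rw [mul_smul_comm, map_smul, smul_eq_mul]
    rw [h1, hwc1 p.1 x]
    congr 1
    exact Finset.sum_congr rfl fun q _ => mul_comm _ _
  -- (K7b) : Π^R = Π^R ∘ Π̄^R
  have hK7b : ∀ x : W, wPiR k W Δ ε x = wPiR k W Δ ε (wPiRbar k W Δ ε x) := by
    intro x
    rw [hπRs, hπRs]
    refine Finset.sum_congr rfl fun p _ => ?_
    have h1 : ε (wPiRbar k W Δ ε x * p.2) = ∑ q ∈ T 1, ε (x * q.1) * ε (q.2 * p.2) := by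
      rw [hπRbars, Finset.sum_mul, map_sum]
      refine Finset.sum_congr rfl fun q _ => ?_
      rw [smul_mul_assoc, map_smul, smul_eq_mul]
    rw [h1, hwc1 x p.2]
  -- (K7) : Π^L (x y) = Π^L (x Π^L y)
  have hK7 : ∀ x y : W, wPiL k W Δ ε (x * y) = wPiL k W Δ ε (x * wPiL k W Δ ε y) := by
    intro x y
    rw [hπLs, hπLs]
    refine Finset.sum_congr rfl fun p _ => ?_
    have h1 : ε (p.1 * (x * wPiL k W Δ ε y)) = ∑ q ∈ T 1, ε (q.1 * y) * ε (p.1 * (x * q.2)) := by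
      rw [hπLs y, Finset.mul_sum, Finset.mul_sum, map_sum]
      refine Finset.sum_congr rfl fun q _ => ?_
      rw [mul_smul_comm, mul_smul_comm, map_smul, smul_eq_mul]
    have h2 : ε (p.1 * (x * y)) = ∑ q ∈ T 1, ε (p.1 * x * q.2) * ε (q.1 * y) := by
      rw [← mul_assoc, hwc2 (p.1 * x) y]
    rw [h1, h2]
    congr 1
    refine Finset.sum_congr rfl fun q _ => ?_
    rw [← mul_assoc]
    exact mul_comm _ _
  -- (K7R) : Π^R (x y) = Π^R (Π^R x · y)
  have hK7R : ∀ x y : W, wPiR k W Δ ε (x * y) = wPiR k W Δ ε (wPiR k W Δ ε x * y) := by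
    intro x y
    rw [hπRs, hπRs]
    refine Finset.sum_congr rfl fun p _ => ?_
    have h1 : ε (wPiR k W Δ ε x * y * p.2) = ∑ q ∈ T 1, ε (x * q.2) * ε (q.1 * y * p.2) := by
      rw [hπRs x, Finset.sum_mul, Finset.sum_mul, map_sum]
      refine Finset.sum_congr rfl fun q _ => ?_
      rw [smul_mul_assoc, smul_mul_assoc, map_smul, smul_eq_mul]
    have h2 : ε (x * y * p.2) = ∑ q ∈ T 1, ε (x * q.2) * ε (q.1 * (y * p.2)) := by
      rw [mul_assoc, hwc2 x (y * p.2)]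
    rw [h1, h2]
    congr 1
    refine Finset.sum_congr rfl fun q _ => ?_
    rw [← mul_assoc]
  -- the linear-map versions of the projections
  set πRm : W →ₗ[k] W := LinearMap.mul' k W ∘ₗ LinearMap.rTensor W S ∘ₗ Δ with hπRmdef
  set πLm : W →ₗ[k] W := LinearMap.mul' k W ∘ₗ LinearMap.lTensor W S ∘ₗ Δ with hπLmdef
  have hπRm : ∀ x : W, πRm x = wPiR k W Δ ε x := fun x => hS1 x
  have hπLm : ∀ x : W, πLm x = wPiL k W Δ ε x := fun x => hS2 x
  -- (TS0) : Π^R ⋆ S = S, map form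
  have hTS0 : ∀ w : W, LinearMap.mul' k W (TensorProduct.map πRm S (Δ w)) = S w := by
    intro w
    rw [← hS3 w]
    conv_lhs => rw [hT w]
    conv_rhs => rw [hT w]
    rw [map_sum, map_sum, map_sum, map_sum, map_sum]
    refine Finset.sum_congr rfl fun p _ => ?_
    rw [LinearMap.rTensor_tmul, TensorProduct.map_tmul, TensorProduct.map_tmul]
    rfl
  -- (TSgen) : Π^R ⋆ S = S for arbitrary representations
  have hTSgen : ∀ (w : W) (s : Finset (W × W)), Δ w = ∑ p ∈ s, p.1 ⊗ₜ[k] p.2 →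
      ∑ p ∈ s, wPiR k W Δ ε p.1 * S p.2 = S w := by
    intro w s hs
    rw [← hTS0 w, hs, map_sum, map_sum]
    refine Finset.sum_congr rfl fun p _ => ?_
    rw [TensorProduct.map_tmul, LinearMap.mul'_apply, hπRm]
  have hTS : ∀ w : W, ∑ p ∈ T w, wPiR k W Δ ε p.1 * S p.2 = S w :=
    fun w => hTSgen w (T w) (hT w)
  -- expansion of Δ² in sum form (coassociativity)
  have hexp : ∀ w : W, TensorProduct.assoc k W W W (LinearMap.rTensor W Δ (Δ w))
      = ∑ p ∈ T w, ∑ q ∈ T p.1, q.1 ⊗ₜ[k] (q.2 ⊗ₜ[k] p.2) := by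
    intro w
    rw [hT w, map_sum, map_sum]
    refine Finset.sum_congr rfl fun p _ => ?_
    rw [LinearMap.rTensor_tmul, hT p.1, TensorProduct.sum_tmul, map_sum]
    exact Finset.sum_congr rfl fun q _ => TensorProduct.assoc_tmul _ _ _
  have hco : ∀ w : W, (∑ p ∈ T w, ∑ q ∈ T p.1, q.1 ⊗ₜ[k] (q.2 ⊗ₜ[k] p.2))
      = ∑ p ∈ T w, ∑ q ∈ T p.2, p.1 ⊗ₜ[k] (q.1 ⊗ₜ[k] q.2) := by
    intro w
    rw [← hexp w, hcoassoc w, hT w, map_sum]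
    refine Finset.sum_congr rfl fun p _ => ?_
    rw [LinearMap.lTensor_tmul, hT p.2, TensorProduct.tmul_sum]
  -- (ST0) : S ⋆ Π^L = S, map form
  have hST0 : ∀ w : W, LinearMap.mul' k W (TensorProduct.map S πLm (Δ w)) = S w := by
    intro w
    set Φ : W ⊗[k] (W ⊗[k] W) →ₗ[k] W :=
      LinearMap.mul' k W ∘ₗ
        TensorProduct.map S (LinearMap.mul' k W ∘ₗ LinearMap.lTensor W S) with hΦdef
    have e1 : Φ (LinearMap.lTensor W Δ (Δ w))
        = LinearMap.mul' k W (TensorProduct.map S πLm (Δ w)) := by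
      conv_lhs => rw [hT w]
      conv_rhs => rw [hT w]
      rw [map_sum, map_sum, map_sum, map_sum]
      refine Finset.sum_congr rfl fun p _ => ?_
      rw [LinearMap.lTensor_tmul, hΦdef]
      simp only [LinearMap.coe_comp, Function.comp_apply, TensorProduct.map_tmul]
      rfl
    have e2 : Φ (TensorProduct.assoc k W W W (LinearMap.rTensor W Δ (Δ w))) = S w := by
      rw [hexp w, ← hTS w, map_sum]
      refine Finset.sum_congr rfl fun p _ => ?_
      rw [map_sum, ← hS1 p.1]
      conv_rhs => rw [hT p.1]
      rw [map_sum, map_sum, Finset.sum_mul]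
      refine Finset.sum_congr rfl fun q _ => ?_
      rw [hΦdef]
      simp only [LinearMap.coe_comp, Function.comp_apply, TensorProduct.map_tmul,
        LinearMap.lTensor_tmul, LinearMap.mul'_apply, LinearMap.rTensor_tmul]
      rw [mul_assoc]
    rw [← e1, ← hcoassoc w, e2]
  have hSTgen : ∀ (w : W) (s : Finset (W × W)), Δ w = ∑ p ∈ s, p.1 ⊗ₜ[k] p.2 →
      ∑ p ∈ s, S p.1 * wPiL k W Δ ε p.2 = S w := by
    intro w s hs
    rw [← hST0 w, hs, map_sum, map_sum]
    refine Finset.sum_congr rfl fun p _ => ?_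
    rw [TensorProduct.map_tmul, LinearMap.mul'_apply, hπLm]
  have hST : ∀ w : W, ∑ p ∈ T w, S p.1 * wPiL k W Δ ε p.2 = S w :=
    fun w => hSTgen w (T w) (hT w)
  have hS2s : ∀ w : W, (∑ q ∈ T w, q.1 * S q.2) = wPiL k W Δ ε w := by
    intro w
    rw [← hS2 w, hT w, map_sum, map_sum]
    exact Finset.sum_congr rfl fun q _ => by
      rw [LinearMap.lTensor_tmul, LinearMap.mul'_apply]
  -- (K20e) : ∑ 1₁ ⊗ Δ(x)·(1₂ ⊗ 1) = ∑ 1₁ ⊗ Δ(x 1₂)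
  have hK20e : ∀ x : W, (∑ q ∈ T 1, ∑ p ∈ T x, q.1 ⊗ₜ[k] ((p.1 * q.2) ⊗ₜ[k] p.2))
      = ∑ q ∈ T 1, q.1 ⊗ₜ[k] Δ (x * q.2) := by
    intro x
    have base : (∑ q ∈ T 1, q.1 ⊗ₜ[k] (Δ 1 * (q.2 ⊗ₜ[k] 1))) = ∑ q ∈ T 1, q.1 ⊗ₜ[k] Δ q.2 := by
      have h1 : (∑ q ∈ T 1, q.1 ⊗ₜ[k] Δ q.2) = LinearMap.lTensor W Δ (Δ 1) := by
        rw [hT 1, map_sum]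
        exact (Finset.sum_congr rfl fun q _ => (LinearMap.lTensor_tmul _ _ _ _).symm)
      rw [h1, LT2, Finset.sum_comm]
      refine Finset.sum_congr rfl fun q _ => ?_
      rw [hT 1, Finset.sum_mul, TensorProduct.tmul_sum]
      refine Finset.sum_congr rfl fun s _ => ?_
      rw [Algebra.TensorProduct.tmul_mul_tmul, mul_one]
    have happ := congrArg (LinearMap.lTensor W (LinearMap.mulLeft k (Δ x))) base
    rw [map_sum, map_sum] at happ
    simp only [LinearMap.lTensor_tmul, LinearMap.mulLeft_apply] at happ
    calc (∑ q ∈ T 1, ∑ p ∈ T x, q.1 ⊗ₜ[k] ((p.1 * q.2) ⊗ₜ[k] p.2))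
        = ∑ q ∈ T 1, q.1 ⊗ₜ[k] (Δ x * (Δ 1 * (q.2 ⊗ₜ[k] 1))) := by
          refine Finset.sum_congr rfl fun q _ => ?_
          rw [← mul_assoc, ← hΔmul x 1, mul_one, hT x, Finset.sum_mul,
            TensorProduct.tmul_sum]
          refine Finset.sum_congr rfl fun p _ => ?_
          rw [Algebra.TensorProduct.tmul_mul_tmul, mul_one]
      _ = ∑ q ∈ T 1, q.1 ⊗ₜ[k] (Δ x * Δ q.2) := happ
      _ = ∑ q ∈ T 1, q.1 ⊗ₜ[k] Δ (x * q.2) := by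
          exact Finset.sum_congr rfl fun q _ => by rw [hΔmul]
  -- (K19e)
  have hK19e : ∀ y : W, (∑ q ∈ T 1, ∑ p ∈ T y, (p.1 ⊗ₜ[k] (q.1 * p.2)) ⊗ₜ[k] q.2)
      = ∑ q ∈ T 1, Δ (q.1 * y) ⊗ₜ[k] q.2 := by
    intro y
    have base : (∑ q ∈ T 1, (((1 : W) ⊗ₜ[k] q.1) * Δ 1) ⊗ₜ[k] q.2)
        = ∑ q ∈ T 1, Δ q.1 ⊗ₜ[k] q.2 := by
      have h1 : (∑ q ∈ T 1, Δ q.1 ⊗ₜ[k] q.2) = LinearMap.rTensor W Δ (Δ 1) := by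
        rw [hT 1, map_sum]
        exact (Finset.sum_congr rfl fun q _ => (LinearMap.rTensor_tmul _ _ _ _).symm)
      rw [h1, WU2]
      refine Finset.sum_congr rfl fun q _ => ?_
      rw [hT 1, Finset.mul_sum, TensorProduct.sum_tmul]
      refine Finset.sum_congr rfl fun s _ => ?_
      rw [Algebra.TensorProduct.tmul_mul_tmul, one_mul]
    have happ := congrArg (LinearMap.rTensor W (LinearMap.mulRight k (Δ y))) base
    rw [map_sum, map_sum] at happ
    simp only [LinearMap.rTensor_tmul, LinearMap.mulRight_apply] at happ
    calc (∑ q ∈ T 1, ∑ p ∈ T y, (p.1 ⊗ₜ[k] (q.1 * p.2)) ⊗ₜ[k] q.2)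
        = ∑ q ∈ T 1, ((((1:W) ⊗ₜ[k] q.1) * Δ 1) * Δ y) ⊗ₜ[k] q.2 := by
          refine Finset.sum_congr rfl fun q _ => ?_
          rw [mul_assoc, ← hΔmul 1 y, one_mul, hT y, Finset.mul_sum,
            TensorProduct.sum_tmul]
          refine Finset.sum_congr rfl fun p _ => ?_
          rw [Algebra.TensorProduct.tmul_mul_tmul, one_mul]
      _ = ∑ q ∈ T 1, (Δ q.1 * Δ y) ⊗ₜ[k] q.2 := happ
      _ = ∑ q ∈ T 1, Δ (q.1 * y) ⊗ₜ[k] q.2 := by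
          exact Finset.sum_congr rfl fun q _ => by rw [hΔmul]
  -- (C1)
  have hC1 : ∀ x y : W, (∑ p ∈ T x, p.1 * wPiL k W Δ ε y * S p.2) = wPiL k W Δ ε (x * y) := by
    intro x y
    set Φ : W ⊗[k] (W ⊗[k] W) →ₗ[k] W :=
      (TensorProduct.lid k W).toLinearMap ∘ₗ
        TensorProduct.map (ε ∘ₗ LinearMap.mulRight k y)
          (LinearMap.mul' k W ∘ₗ LinearMap.lTensor W S) with hΦdef
    have hΦap : ∀ (c : W) (A : W ⊗[k] W),
        Φ (c ⊗ₜ[k] A) = ε (c * y) • LinearMap.mul' k W (LinearMap.lTensor W S A) := by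
      intro c A
      simp [hΦdef, TensorProduct.map_tmul, TensorProduct.lid_tmul]
    have himg := congrArg Φ (hK20e x)
    rw [map_sum, map_sum] at himg
    have hL : (∑ q ∈ T 1, Φ (∑ p ∈ T x, q.1 ⊗ₜ[k] ((p.1 * q.2) ⊗ₜ[k] p.2)))
        = ∑ q ∈ T 1, ∑ p ∈ T x, ε (q.1 * y) • (p.1 * q.2 * S p.2) := by
      refine Finset.sum_congr rfl fun q _ => ?_
      rw [map_sum]
      refine Finset.sum_congr rfl fun p _ => ?_
      rw [hΦap, LinearMap.lTensor_tmul, LinearMap.mul'_apply]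
    have hR : (∑ q ∈ T 1, Φ (q.1 ⊗ₜ[k] Δ (x * q.2)))
        = ∑ q ∈ T 1, ε (q.1 * y) • wPiL k W Δ ε (x * q.2) := by
      refine Finset.sum_congr rfl fun q _ => ?_
      rw [hΦap, hS2]
    rw [hL, hR] at himg
    have hmix : wPiL k W Δ ε (x * wPiL k W Δ ε y)
        = ∑ q ∈ T 1, ε (q.1 * y) • wPiL k W Δ ε (x * q.2) := by
      rw [hπLs (x * wPiL k W Δ ε y)]
      calc (∑ p ∈ T 1, ε (p.1 * (x * wPiL k W Δ ε y)) • p.2)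
          = ∑ p ∈ T 1, ∑ q ∈ T 1, (ε (q.1 * y) * ε (p.1 * (x * q.2))) • p.2 := by
            refine Finset.sum_congr rfl fun p _ => ?_
            have h1 : ε (p.1 * (x * wPiL k W Δ ε y))
                = ∑ q ∈ T 1, ε (q.1 * y) * ε (p.1 * (x * q.2)) := by
              rw [hπLs y, Finset.mul_sum, Finset.mul_sum, map_sum]
              refine Finset.sum_congr rfl fun q _ => ?_
              rw [mul_smul_comm, mul_smul_comm, map_smul, smul_eq_mul]
            rw [h1, Finset.sum_smul]
        _ = ∑ q ∈ T 1, ε (q.1 * y) • wPiL k W Δ ε (x * q.2) := by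
            rw [Finset.sum_comm]
            refine Finset.sum_congr rfl fun q _ => ?_
            rw [hπLs (x * q.2), Finset.smul_sum]
            exact Finset.sum_congr rfl fun p _ => (mul_smul _ _ _)
    calc (∑ p ∈ T x, p.1 * wPiL k W Δ ε y * S p.2)
        = ∑ p ∈ T x, ∑ q ∈ T 1, ε (q.1 * y) • (p.1 * q.2 * S p.2) := by
          refine Finset.sum_congr rfl fun p _ => ?_
          rw [hπLs y, Finset.mul_sum, Finset.sum_mul]
          refine Finset.sum_congr rfl fun q _ => ?_
          rw [mul_smul_comm, smul_mul_assoc]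
      _ = ∑ q ∈ T 1, ε (q.1 * y) • wPiL k W Δ ε (x * q.2) := by rw [← himg, Finset.sum_comm]
      _ = wPiL k W Δ ε (x * wPiL k W Δ ε y) := hmix.symm
      _ = wPiL k W Δ ε (x * y) := (hK7 x y).symm
  -- (C1')
  have hC1' : ∀ x y : W, (∑ p ∈ T y, S p.1 * wPiR k W Δ ε x * p.2) = wPiR k W Δ ε (x * y) := by
    intro x y
    set Φ : (W ⊗[k] W) ⊗[k] W →ₗ[k] W :=
      (TensorProduct.rid k W).toLinearMap ∘ₗ
        TensorProduct.map (LinearMap.mul' k W ∘ₗ LinearMap.rTensor W S)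
          (ε ∘ₗ LinearMap.mulLeft k x) with hΦdef
    have hΦap : ∀ (A : W ⊗[k] W) (c : W),
        Φ (A ⊗ₜ[k] c) = ε (x * c) • LinearMap.mul' k W (LinearMap.rTensor W S A) := by
      intro A c
      simp [hΦdef, TensorProduct.map_tmul, TensorProduct.rid_tmul]
    have himg := congrArg Φ (hK19e y)
    rw [map_sum, map_sum] at himg
    have hL : (∑ q ∈ T 1, Φ (∑ p ∈ T y, (p.1 ⊗ₜ[k] (q.1 * p.2)) ⊗ₜ[k] q.2))
        = ∑ q ∈ T 1, ∑ p ∈ T y, ε (x * q.2) • (S p.1 * (q.1 * p.2)) := by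
      refine Finset.sum_congr rfl fun q _ => ?_
      rw [map_sum]
      refine Finset.sum_congr rfl fun p _ => ?_
      rw [hΦap, LinearMap.rTensor_tmul, LinearMap.mul'_apply]
    have hR : (∑ q ∈ T 1, Φ (Δ (q.1 * y) ⊗ₜ[k] q.2))
        = ∑ q ∈ T 1, ε (x * q.2) • wPiR k W Δ ε (q.1 * y) := by
      refine Finset.sum_congr rfl fun q _ => ?_
      rw [hΦap, hS1]
    rw [hL, hR] at himg
    have hmix : wPiR k W Δ ε (wPiR k W Δ ε x * y)
        = ∑ q ∈ T 1, ε (x * q.2) • wPiR k W Δ ε (q.1 * y) := by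
      rw [hπRs (wPiR k W Δ ε x * y)]
      calc (∑ p ∈ T 1, ε (wPiR k W Δ ε x * y * p.2) • p.1)
          = ∑ p ∈ T 1, ∑ q ∈ T 1, (ε (x * q.2) * ε (q.1 * y * p.2)) • p.1 := by
            refine Finset.sum_congr rfl fun p _ => ?_
            have h1 : ε (wPiR k W Δ ε x * y * p.2)
                = ∑ q ∈ T 1, ε (x * q.2) * ε (q.1 * y * p.2) := by
              rw [hπRs x, Finset.sum_mul, Finset.sum_mul, map_sum]
              refine Finset.sum_congr rfl fun q _ => ?_
              rw [smul_mul_assoc, smul_mul_assoc, map_smul, smul_eq_mul]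
            rw [h1, Finset.sum_smul]
        _ = ∑ q ∈ T 1, ε (x * q.2) • wPiR k W Δ ε (q.1 * y) := by
            rw [Finset.sum_comm]
            refine Finset.sum_congr rfl fun q _ => ?_
            rw [hπRs (q.1 * y), Finset.smul_sum]
            refine Finset.sum_congr rfl fun p _ => ?_
            rw [mul_smul, mul_assoc]
    calc (∑ p ∈ T y, S p.1 * wPiR k W Δ ε x * p.2)
        = ∑ p ∈ T y, ∑ q ∈ T 1, ε (x * q.2) • (S p.1 * (q.1 * p.2)) := by
          refine Finset.sum_congr rfl fun p _ => ?_
          rw [hπRs x, Finset.mul_sum, Finset.sum_mul]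
          refine Finset.sum_congr rfl fun q _ => ?_
          rw [mul_smul_comm, smul_mul_assoc, mul_assoc]
      _ = ∑ q ∈ T 1, ε (x * q.2) • wPiR k W Δ ε (q.1 * y) := by rw [← himg, Finset.sum_comm]
      _ = wPiR k W Δ ε (wPiR k W Δ ε x * y) := hmix.symm
      _ = wPiR k W Δ ε (x * y) := (hK7R x y).symm
  -- (CM) : Π^R a and Π^L b commute
  have hCM : ∀ a b : W,
      wPiR k W Δ ε a * wPiL k W Δ ε b = wPiL k W Δ ε b * wPiR k W Δ ε a := by
    intro a b
    set Ω : (W ⊗[k] W) ⊗[k] W →ₗ[k] W :=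
      (TensorProduct.rid k W).toLinearMap ∘ₗ
        TensorProduct.map
          ((TensorProduct.lid k W).toLinearMap ∘ₗ LinearMap.rTensor W (ε ∘ₗ LinearMap.mulRight k b))
          (ε ∘ₗ LinearMap.mulLeft k a) with hΩdef
    have hΩap : ∀ u v w : W, Ω ((u ⊗ₜ[k] v) ⊗ₜ[k] w) = ε (a * w) • (ε (u * b) • v) := by
      intro u v w
      simp [hΩdef, TensorProduct.map_tmul, TensorProduct.lid_tmul, TensorProduct.rid_tmul]
    have h1 : Ω (LinearMap.rTensor W Δ (Δ 1)) = wPiL k W Δ ε b * wPiR k W Δ ε a := by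
      rw [WU1, map_sum, hπLs, hπRs, Finset.sum_mul_sum]
      refine Finset.sum_congr rfl fun q _ => ?_
      rw [map_sum]
      refine Finset.sum_congr rfl fun p _ => ?_
      rw [hΩap, smul_mul_assoc, mul_smul_comm]
      exact smul_comm _ _ _
    have h2 : Ω (LinearMap.rTensor W Δ (Δ 1)) = wPiR k W Δ ε a * wPiL k W Δ ε b := by
      rw [WU2, map_sum, hπLs, hπRs, Finset.sum_mul_sum]
      refine Finset.sum_congr rfl fun p _ => ?_
      rw [map_sum]
      refine Finset.sum_congr rfl fun q _ => ?_
      rw [hΩap, smul_mul_assoc, mul_smul_comm]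
    rw [← h1, h2]
  -- sum forms of the antipode axioms
  have hS1s : ∀ w : W, (∑ q ∈ T w, S q.1 * q.2) = wPiR k W Δ ε w := by
    intro w
    rw [← hS1 w, hT w, map_sum, map_sum]
    exact Finset.sum_congr rfl fun q _ => by
      rw [LinearMap.rTensor_tmul, LinearMap.mul'_apply]
  -- (Aux1)
  have hAux1 : ∀ b x : W,
      (∑ q ∈ T x, ∑ t ∈ T q.2, S q.1 * (t.1 * (wPiL k W Δ ε b * S t.2)))
        = wPiL k W Δ ε b * S x := by
    intro b x
    set Λ : W ⊗[k] (W ⊗[k] W) →ₗ[k] W :=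
      LinearMap.mul' k W ∘ₗ TensorProduct.map S
        (LinearMap.mul' k W ∘ₗ TensorProduct.map LinearMap.id
          (LinearMap.mulLeft k (wPiL k W Δ ε b) ∘ₗ S)) with hΛdef
    have hΛap : ∀ α β γ : W,
        Λ (α ⊗ₜ[k] (β ⊗ₜ[k] γ)) = S α * (β * (wPiL k W Δ ε b * S γ)) := by
      intro α β γ
      simp [hΛdef]
    have himg := congrArg Λ (hco x)
    simp only [map_sum, hΛap] at himg
    rw [← himg]
    calc (∑ p ∈ T x, ∑ q ∈ T p.1, S q.1 * (q.2 * (wPiL k W Δ ε b * S p.2)))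
        = ∑ p ∈ T x, wPiR k W Δ ε p.1 * (wPiL k W Δ ε b * S p.2) := by
          refine Finset.sum_congr rfl fun p _ => ?_
          rw [← hS1s p.1, Finset.sum_mul]
          exact Finset.sum_congr rfl fun q _ => (mul_assoc _ _ _).symm
      _ = ∑ p ∈ T x, wPiL k W Δ ε b * (wPiR k W Δ ε p.1 * S p.2) := by
          refine Finset.sum_congr rfl fun p _ => ?_
          rw [← mul_assoc, hCM, mul_assoc]
      _ = wPiL k W Δ ε b * S x := by rw [← Finset.mul_sum, hTS x]
  -- (C4)
  have hC4 : ∀ x y : W,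
      (∑ p ∈ T y, ∑ q ∈ T x, S p.1 * S q.1 * wPiL k W Δ ε (q.2 * p.2)) = S y * S x := by
    intro x y
    calc (∑ p ∈ T y, ∑ q ∈ T x, S p.1 * S q.1 * wPiL k W Δ ε (q.2 * p.2))
        = ∑ p ∈ T y, S p.1 * (wPiL k W Δ ε p.2 * S x) := by
          refine Finset.sum_congr rfl fun p _ => ?_
          rw [← hAux1 p.2 x, Finset.mul_sum]
          refine Finset.sum_congr rfl fun q _ => ?_
          rw [← hC1 q.2 p.2]
          simp only [Finset.mul_sum]
          refine Finset.sum_congr rfl fun t _ => ?_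
          simp only [mul_assoc]
      _ = (∑ p ∈ T y, S p.1 * wPiL k W Δ ε p.2) * S x := by
          rw [Finset.sum_mul]
          exact Finset.sum_congr rfl fun p _ => (mul_assoc _ _ _).symm
      _ = S y * S x := by rw [hST y]
  -- anti-multiplicativity of S
  have hAM : ∀ x y : W, S (x * y) = S y * S x := by
    intro x y
    have hA : S (x * y)
        = ∑ q ∈ T x, ∑ p ∈ T y, wPiR k W Δ ε (q.1 * p.1) * S (q.2 * p.2) := by
      rw [← hTS0 (x * y), hΔmul x y, hT x, hT y, Finset.sum_mul_sum]
      simp only [Algebra.TensorProduct.tmul_mul_tmul, map_sum, TensorProduct.map_tmul,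
        LinearMap.mul'_apply, hπRm]
    have hBC : ∀ q : W × W, (∑ p ∈ T y, wPiR k W Δ ε (q.1 * p.1) * S (q.2 * p.2))
        = ∑ p ∈ T y, ∑ t ∈ T p.2,
            S p.1 * (wPiR k W Δ ε q.1 * (t.1 * S (q.2 * t.2))) := by
      intro q
      set Γ : W ⊗[k] (W ⊗[k] W) →ₗ[k] W :=
        LinearMap.mul' k W ∘ₗ TensorProduct.map S
          (LinearMap.mulLeft k (wPiR k W Δ ε q.1) ∘ₗ LinearMap.mul' k W ∘ₗ
            TensorProduct.map LinearMap.id (S ∘ₗ LinearMap.mulLeft k q.2)) with hΓdef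
      have hΓap : ∀ α β γ : W,
          Γ (α ⊗ₜ[k] (β ⊗ₜ[k] γ)) = S α * (wPiR k W Δ ε q.1 * (β * S (q.2 * γ))) := by
        intro α β γ
        simp [hΓdef]
      have himg := congrArg Γ (hco y)
      simp only [map_sum, hΓap] at himg
      rw [← himg]
      refine Finset.sum_congr rfl fun p _ => ?_
      rw [← hC1' q.1 p.1, Finset.sum_mul]
      refine Finset.sum_congr rfl fun t _ => ?_
      simp only [mul_assoc]
    have hF : ∀ t : W × W,
        (∑ q ∈ T x, ∑ r ∈ T q.2, S q.1 * (r.1 * (t.1 * S (r.2 * t.2))))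
          = ∑ q ∈ T x, wPiR k W Δ ε q.1 * (t.1 * S (q.2 * t.2)) := by
      intro t
      set Θ : W ⊗[k] (W ⊗[k] W) →ₗ[k] W :=
        LinearMap.mul' k W ∘ₗ TensorProduct.map S
          (LinearMap.mul' k W ∘ₗ TensorProduct.map LinearMap.id
            (LinearMap.mulLeft k t.1 ∘ₗ S ∘ₗ LinearMap.mulRight k t.2)) with hΘdef
      have hΘap : ∀ α β γ : W,
          Θ (α ⊗ₜ[k] (β ⊗ₜ[k] γ)) = S α * (β * (t.1 * S (γ * t.2))) := by
        intro α β γ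
        simp [hΘdef]
      have himg := congrArg Θ (hco x)
      simp only [map_sum, hΘap] at himg
      rw [← himg]
      refine Finset.sum_congr rfl fun q _ => ?_
      rw [← hS1s q.1, Finset.sum_mul]
      exact Finset.sum_congr rfl fun r _ => (mul_assoc _ _ _).symm
    have hE : S y * S x
        = ∑ p ∈ T y, ∑ t ∈ T p.2, S p.1 *
            (∑ q ∈ T x, ∑ r ∈ T q.2, S q.1 * (r.1 * (t.1 * S (r.2 * t.2)))) := by
      rw [← hC4 x y]
      refine Finset.sum_congr rfl fun p _ => ?_
      have hexp : ∀ q : W × W, wPiL k W Δ ε (q.2 * p.2)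
          = ∑ r ∈ T q.2, ∑ t ∈ T p.2, (r.1 * t.1) * S (r.2 * t.2) := by
        intro q
        rw [← hS2 (q.2 * p.2), hΔmul, hT q.2, hT p.2, Finset.sum_mul_sum]
        simp only [Algebra.TensorProduct.tmul_mul_tmul, map_sum, LinearMap.lTensor_tmul,
          LinearMap.mul'_apply]
      calc (∑ q ∈ T x, S p.1 * S q.1 * wPiL k W Δ ε (q.2 * p.2))
          = ∑ q ∈ T x, ∑ t ∈ T p.2, ∑ r ∈ T q.2,
              S p.1 * (S q.1 * (r.1 * (t.1 * S (r.2 * t.2)))) := by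
            refine Finset.sum_congr rfl fun q _ => ?_
            rw [hexp q]
            simp only [Finset.mul_sum]
            rw [Finset.sum_comm]
            refine Finset.sum_congr rfl fun t _ => ?_
            refine Finset.sum_congr rfl fun r _ => ?_
            simp only [mul_assoc]
        _ = ∑ t ∈ T p.2, S p.1 *
              (∑ q ∈ T x, ∑ r ∈ T q.2, S q.1 * (r.1 * (t.1 * S (r.2 * t.2)))) := by
            rw [Finset.sum_comm]
            refine Finset.sum_congr rfl fun t _ => ?_
            rw [Finset.mul_sum]
            refine Finset.sum_congr rfl fun q _ => ?_
            rw [Finset.mul_sum]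
    calc S (x * y)
        = ∑ q ∈ T x, ∑ p ∈ T y, ∑ t ∈ T p.2,
            S p.1 * (wPiR k W Δ ε q.1 * (t.1 * S (q.2 * t.2))) := by
          rw [hA]
          exact Finset.sum_congr rfl fun q _ => hBC q
      _ = ∑ p ∈ T y, ∑ t ∈ T p.2, S p.1 *
            (∑ q ∈ T x, wPiR k W Δ ε q.1 * (t.1 * S (q.2 * t.2))) := by
          rw [Finset.sum_comm]
          refine Finset.sum_congr rfl fun p _ => ?_
          rw [Finset.sum_comm]
          refine Finset.sum_congr rfl fun t _ => ?_
          rw [Finset.mul_sum]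
      _ = S y * S x := by
          rw [hE]
          refine Finset.sum_congr rfl fun p _ => ?_
          refine Finset.sum_congr rfl fun t _ => ?_
          rw [hF t]
  have hinj : Function.Injective S := hSbar₁.injective
  -- target 1
  have t1 : ∀ x : W, wPiL k W Δ ε x = S (wPiLbar k W Δ ε x) := by
    intro x
    have h5 : S (wPiLbar k W Δ ε x)
        = ∑ p ∈ T 1, wPiR k W Δ ε p.1 * S (wPiLbar k W Δ ε x * p.2) := by
      rw [← hTS0 (wPiLbar k W Δ ε x), hK27 x, map_sum, map_sum]
      exact Finset.sum_congr rfl fun p _ => by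
        rw [TensorProduct.map_tmul, LinearMap.mul'_apply, hπRm]
    have h6 : (∑ p ∈ T 1, wPiR k W Δ ε p.1 * S (wPiLbar k W Δ ε x * p.2))
        = ∑ p ∈ T 1, p.1 * S (wPiLbar k W Δ ε x * p.2) := by
      set χ : W ⊗[k] W →ₗ[k] W :=
        LinearMap.mul' k W ∘ₗ TensorProduct.map LinearMap.id
          (S ∘ₗ LinearMap.mulLeft k (wPiLbar k W Δ ε x)) with hχdef
      have hχap : ∀ a b : W, χ (a ⊗ₜ[k] b) = a * S (wPiLbar k W Δ ε x * b) := by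
        intro a b
        simp [hχdef]
      have := congrArg χ hK9
      rw [map_sum, hT 1, map_sum] at this
      simp only [hχap] at this
      exact this
    have h7 : (∑ p ∈ T 1, p.1 * S (wPiLbar k W Δ ε x * p.2))
        = wPiL k W Δ ε (wPiLbar k W Δ ε x) := by
      rw [← hS2 (wPiLbar k W Δ ε x), hK27 x, map_sum, map_sum]
      exact Finset.sum_congr rfl fun p _ => by
        rw [LinearMap.lTensor_tmul, LinearMap.mul'_apply]
    rw [hK6 x, ← h7, ← h6, ← h5]
  -- target 2
  have t2 : ∀ x : W, wPiR k W Δ ε x = S (wPiRbar k W Δ ε x) := by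
    intro x
    have h5 : S (wPiRbar k W Δ ε x)
        = ∑ p ∈ T 1, S (wPiRbar k W Δ ε x * p.1) * wPiL k W Δ ε p.2 := by
      rw [← hST0 (wPiRbar k W Δ ε x), hK28 x, map_sum, map_sum]
      exact Finset.sum_congr rfl fun p _ => by
        rw [TensorProduct.map_tmul, LinearMap.mul'_apply, hπLm]
    have h6 : (∑ p ∈ T 1, S (wPiRbar k W Δ ε x * p.1) * wPiL k W Δ ε p.2)
        = ∑ p ∈ T 1, S (wPiRbar k W Δ ε x * p.1) * p.2 := by
      set χ : W ⊗[k] W →ₗ[k] W :=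
        LinearMap.mul' k W ∘ₗ TensorProduct.map
          (S ∘ₗ LinearMap.mulLeft k (wPiRbar k W Δ ε x)) LinearMap.id with hχdef
      have hχap : ∀ a b : W, χ (a ⊗ₜ[k] b) = S (wPiRbar k W Δ ε x * a) * b := by
        intro a b
        simp [hχdef]
      have := congrArg χ hK10
      rw [map_sum, hT 1, map_sum] at this
      simp only [hχap] at this
      exact this
    have h7 : (∑ p ∈ T 1, S (wPiRbar k W Δ ε x * p.1) * p.2)
        = wPiR k W Δ ε (wPiRbar k W Δ ε x) := by
      rw [← hS1 (wPiRbar k W Δ ε x), hK28 x, map_sum, map_sum]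
      exact Finset.sum_congr rfl fun p _ => by
        rw [LinearMap.rTensor_tmul, LinearMap.mul'_apply]
    rw [hK7b x, ← h7, ← h6, ← h5]
  -- target 3
  have t3 : ∀ a : W, LinearMap.mul' k W
      (LinearMap.rTensor W Sbar (TensorProduct.comm k W W (Δ a))) = wPiRbar k W Δ ε a := by
    intro a
    apply hinj
    have hlhs : LinearMap.mul' k W (LinearMap.rTensor W Sbar (TensorProduct.comm k W W (Δ a)))
        = ∑ p ∈ T a, Sbar p.2 * p.1 := by
      rw [hT a, map_sum, map_sum, map_sum]
      exact Finset.sum_congr rfl fun p _ => by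
        rw [TensorProduct.comm_tmul, LinearMap.rTensor_tmul, LinearMap.mul'_apply]
    rw [hlhs, map_sum, ← t2 a, ← hS1s a]
    exact Finset.sum_congr rfl fun p _ => by rw [hAM, hSbar₂ p.2]
  -- target 4
  have t4 : ∀ a : W, LinearMap.mul' k W
      (LinearMap.lTensor W Sbar (TensorProduct.comm k W W (Δ a))) = wPiLbar k W Δ ε a := by
    intro a
    apply hinj
    have hlhs : LinearMap.mul' k W (LinearMap.lTensor W Sbar (TensorProduct.comm k W W (Δ a)))
        = ∑ p ∈ T a, p.2 * Sbar p.1 := by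
      rw [hT a, map_sum, map_sum, map_sum]
      exact Finset.sum_congr rfl fun p _ => by
        rw [TensorProduct.comm_tmul, LinearMap.lTensor_tmul, LinearMap.mul'_apply]
    rw [hlhs, map_sum, ← t1 a, ← hS2s a]
    exact Finset.sum_congr rfl fun p _ => by rw [hAM, hSbar₂ p.1]
  exact ⟨t1, t2, t3, t4⟩

end
end

section
/- Let K be a normal Hopf subalgebra of a finite dimensional Hopf algebra H over a field, with n = dim H/dim K, and let Λ_H be a nonzero two-sided integral of H. Then the Schneider canonical isomorphism β̄: H ⊗_K H → H ⊗ (H/K⁺H), a ⊗_K b ↦ a b_{(1)} ⊗ (b_{(2)} mod K⁺H), sends Λ_H ⊗_K a to Λ_H ⊗ (a mod K⁺H); consequently if H ≅ K^n as left K-modules then dim(H/K⁺H) = n. -/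
open TensorProduct Coalgebra HopfAlgebra

set_option maxHeartbeats 1000000 in
set_option synthInstance.maxHeartbeats 200000 in
/-- Let `K` be a normal Hopf subalgebra of a finite dimensional Hopf algebra
`H` over a field, with `n = dim H / dim K`, and `Λ_H` a nonzero two-sided integral of `H`.
Then the Schneider canonical isomorphism `β̄ : H ⊗_K H ≅ H ⊗ (H/K⁺H)`,
`a ⊗_K b ↦ a b₍₁₎ ⊗ (b₍₂₎ mod K⁺H)`, sends `Λ_H ⊗_K a` to `Λ_H ⊗ (a mod K⁺H)`; consequently
if `H ≅ K^n` as left `K`-modules then `dim (H/K⁺H) = n`. -/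
theorem schneider_isomorphism_integral_and_quotient_dimension
    (k : Type*) [Field k] (H : Type*) [Ring H] [HopfAlgebra k H] [FiniteDimensional k H]
    (K : Subalgebra k H)
    -- `K` is a Hopf subalgebra
    (hΔ : ∀ x ∈ K, comul (R := k) x ∈
      LinearMap.range (TensorProduct.map K.val.toLinearMap K.val.toLinearMap))
    (hSK : ∀ x ∈ K, antipode (R := k) x ∈ K)
    -- `K` is normal in `H`
    (hnormal : ∀ a : H, ∀ x ∈ K,
      LinearMap.mul' k H
        ((TensorProduct.map (LinearMap.mulRight k x) (antipode (R := k)))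
          (comul (R := k) a)) ∈ K)
    -- `Λ` is a nonzero two-sided integral of `H`
    (Λ : H) (hΛ0 : Λ ≠ 0)
    (hΛl : ∀ a : H, a * Λ = (counit (R := k) a : k) • Λ)
    (hΛr : ∀ a : H, Λ * a = (counit (R := k) a : k) • Λ) :
    -- with `J = K⁺H` and `rel` the middle `K`-relations defining `H ⊗_K H`:
    ∀ (J : Submodule k H), J = Submodule.span k
      {z : H | ∃ x ∈ K, (counit (R := k) x : k) = 0 ∧ ∃ h : H, z = x * h} →
    ∀ (rel : Submodule k (H ⊗[k] H)), rel = Submodule.span k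
      {z | ∃ (x y b : H), b ∈ K ∧ z = (x * b) ⊗ₜ[k] y - x ⊗ₜ[k] (b * y)} →
    -- given the Schneider canonical isomorphism `β̄ : H ⊗_K H ≅ H ⊗ (H/K⁺H)`
    (∃ βbar : ((H ⊗[k] H) ⧸ rel) →ₗ[k] H ⊗[k] (H ⧸ J),
      (∀ x y : H, βbar (Submodule.Quotient.mk (x ⊗ₜ[k] y)) =
        TensorProduct.map (LinearMap.mulLeft k x) J.mkQ (comul (R := k) y)) ∧
      Function.Bijective βbar) →
    -- (1) `β̄` sends `Λ ⊗_K a` to `Λ ⊗ ā`: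
    (∀ a : H,
      TensorProduct.map (LinearMap.mulLeft k Λ) J.mkQ (comul (R := k) a)
        = Λ ⊗ₜ[k] (J.mkQ a)) ∧
    -- (2) if `H ≅ K^n` as left `K`-modules then `dim (H/K⁺H) = n`
    (∀ n : ℕ, (Nonempty (H ≃ₗ[K] (Fin n → K))) → Module.finrank k (H ⧸ J) = n) := by
  intro J hJ rel hrel hβex
  obtain ⟨βbar, hβ, hbij⟩ := hβex
  constructor
  · -- Part (1)
    intro a
    have h1 : (LinearMap.mulLeft k Λ) =
        LinearMap.toSpanSingleton k H Λ ∘ₗ (counit (R := k) (A := H)) := by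
      ext x
      simp [LinearMap.mulLeft_apply, hΛr x, LinearMap.toSpanSingleton_apply]
    have h2 : TensorProduct.map (LinearMap.mulLeft k Λ) J.mkQ =
        (TensorProduct.map (LinearMap.toSpanSingleton k H Λ) J.mkQ) ∘ₗ
          (LinearMap.rTensor H (counit (R := k) (A := H))) := by
      rw [LinearMap.rTensor, ← TensorProduct.map_comp, ← h1, LinearMap.comp_id]
    rw [h2, LinearMap.comp_apply, Coalgebra.rTensor_counit_comul, TensorProduct.map_tmul,
      LinearMap.toSpanSingleton_apply, one_smul]
  · -- Part (2)
    rintro n ⟨e⟩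
    haveI : Nontrivial H := nontrivial_of_ne Λ 0 hΛ0
    -- key facts about e
    have heK : ∀ (b : K) (y : H) (i : Fin n), ((e ((b : H) * y) i : K) : H) = (b : H) * (e y i : H) := by
      intro b y i
      rw [show (b : H) * y = b • y from rfl, map_smul]
      rfl
    have hek : ∀ (c : k) (y : H) (i : Fin n), ((e (c • y) i : K) : H) = c • ((e y i : K) : H) := by
      intro c y i
      rw [algebra_compatible_smul K c y, map_smul, Pi.smul_apply]
      simp [Algebra.smul_def]
    -- forward map
    let φ₀ : H →ₗ[k] H →ₗ[k] (Fin n → H) :=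
      { toFun := fun x =>
        { toFun := fun y i => x * (e y i : H)
          map_add' := by
            intro y z
            funext i
            show x * ((e (y + z) i : K) : H) = x * (e y i : H) + x * (e z i : H)
            rw [map_add, Pi.add_apply]
            push_cast
            rw [mul_add]
          map_smul' := by
            intro c y
            funext i
            show x * ((e (c • y) i : K) : H) = c • (x * (e y i : H))
            rw [hek, Algebra.mul_smul_comm] }
        map_add' := by intro x z; ext y; exact add_mul x z _
        map_smul' := by intro c x; ext y; exact smul_mul_assoc c x _ }
    let φ : H ⊗[k] H →ₗ[k] (Fin n → H) := TensorProduct.lift φ₀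
    have hφ : ∀ x y : H, φ (x ⊗ₜ[k] y) = fun i => x * (e y i : H) := fun _ _ => rfl
    have hker : rel ≤ LinearMap.ker φ := by
      rw [hrel, Submodule.span_le]
      rintro z ⟨x, y, b, hb, rfl⟩
      simp only [SetLike.mem_coe, LinearMap.mem_ker, map_sub, hφ, sub_eq_zero]
      funext i
      show (x * b) * (e y i : H) = x * ((e (b * y) i : K) : H)
      rw [show b * y = ((⟨b, hb⟩ : K) : H) * y from rfl, heK, mul_assoc]
    let φbar : ((H ⊗[k] H) ⧸ rel) →ₗ[k] (Fin n → H) := rel.liftQ φ hker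
    -- backward map
    let hh : Fin n → H := fun i => e.symm (Pi.single i 1)
    let ψ : (Fin n → H) →ₗ[k] ((H ⊗[k] H) ⧸ rel) :=
      ∑ i, (rel.mkQ ∘ₗ ((TensorProduct.mk k H H).flip (hh i))) ∘ₗ LinearMap.proj i
    have hψ : ∀ f : Fin n → H, ψ f = ∑ i, rel.mkQ (f i ⊗ₜ[k] hh i) := by
      intro f; simp [ψ, LinearMap.sum_apply]
    -- φbar ∘ ψ = id
    have h1 : φbar ∘ₗ ψ = LinearMap.id := by
      apply LinearMap.ext
      intro f
      rw [LinearMap.comp_apply, hψ, map_sum]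
      funext j
      have hφbar : ∀ z : H ⊗[k] H, φbar (rel.mkQ z) = φ z := fun z => rfl
      simp only [Finset.sum_apply, LinearMap.id_apply, hφbar, hφ]
      have key : ∀ i, f i * ((e (hh i)) j : H) = if j = i then f j else 0 := by
        intro i
        simp only [hh, LinearEquiv.apply_symm_apply, Pi.single_apply]
        split_ifs with h
        · subst h; simp
        · simp
      rw [Finset.sum_congr rfl fun i _ => key i]
      simp
    -- ψ ∘ φbar = id
    have h2 : ψ ∘ₗ φbar = LinearMap.id := by
      apply Submodule.linearMap_qext
      apply TensorProduct.ext'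
      intro x y
      simp only [LinearMap.comp_apply, LinearMap.id_apply]
      rw [show φbar (rel.mkQ (x ⊗ₜ[k] y)) = φ (x ⊗ₜ[k] y) from rfl, hφ, hψ]
      have step1 : ∀ i, rel.mkQ ((x * (e y i : H)) ⊗ₜ[k] hh i)
          = rel.mkQ (x ⊗ₜ[k] ((e y i : H) * hh i)) := by
        intro i
        rw [Submodule.mkQ_apply, Submodule.mkQ_apply, Submodule.Quotient.eq, hrel]
        exact Submodule.subset_span ⟨x, hh i, e y i, SetLike.coe_mem _, rfl⟩
      rw [Finset.sum_congr rfl fun i _ => step1 i, ← map_sum, ← TensorProduct.tmul_sum]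
      have key : ∀ i, (e y i : H) * hh i = (e.symm (Pi.single i (e y i)) : H) := by
        intro i
        rw [show (e y i : H) * hh i = (e y i) • hh i from rfl, ← map_smul]
        congr 1
        funext j
        simp only [Pi.smul_apply, Pi.single_apply, smul_eq_mul]
        split_ifs <;> simp
      have hsum : (∑ i, Pi.single i (e y i) : Fin n → K) = e y := by
        funext j
        rw [Finset.sum_apply]
        simp [Pi.single_apply]
      have hy : (∑ i, (e y i : H) * hh i) = y := by
        rw [Finset.sum_congr rfl fun i _ => key i, ← map_sum, hsum, LinearEquiv.symm_apply_apply]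
      rw [hy]
    let E : ((H ⊗[k] H) ⧸ rel) ≃ₗ[k] (Fin n → H) := LinearEquiv.ofLinear φbar ψ h1 h2
    let B : ((H ⊗[k] H) ⧸ rel) ≃ₗ[k] H ⊗[k] (H ⧸ J) := LinearEquiv.ofBijective βbar hbij
    have hfin : Module.finrank k (Fin n → H) = Module.finrank k (H ⊗[k] (H ⧸ J)) := by
      rw [← E.finrank_eq, B.finrank_eq]
    rw [Module.finrank_pi_fintype, Module.finrank_tensorProduct] at hfin
    simp only [Finset.sum_const, Finset.card_univ, Fintype.card_fin, smul_eq_mul] at hfin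
    have hd : 0 < Module.finrank k H := Module.finrank_pos
    exact (Nat.eq_of_mul_eq_mul_left hd (by rw [mul_comm (Module.finrank k H) n, hfin])).symm
end
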